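/- arXiv:1310.7240 — 9 statements merged into one kernel-verified Lean document; each statement's English description precedes it below -/
import Mathlib

section
/- Let n = (n_1,…,n_p) be a composition and for l ∈ ℤ_{≥0} let k(l), a(l), r(l) denote its block index, type and offset with respect to n. Fix a ∈ {1,…,p} and l ∈ ℤ_{≥0}, and let c = #{i : 0 ≤ i ≤ l, a(i) = a}. Then the map i ↦ k(i)·n_a + r(i) restricted to {i : 0 ≤ i ≤ l, a(i) = a} is a strictly increasing bijection onto {0, 1, …, c − 1}. -/
/-- A downward-closed finset of naturals is an initial segment. -/
lemma aux_range_of_dc (M : Finset ℕ) (hdc : ∀ m ∈ M, ∀ m', m' ≤ m → m' ∈ M) :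
    M = Finset.range M.card := by
  apply Finset.eq_of_subset_of_card_le
  · intro x hx
    rw [Finset.mem_range]
    have h1 : Finset.range (x + 1) ⊆ M := by
      intro y hy
      exact hdc x hx y (Nat.lt_succ_iff.mp (Finset.mem_range.mp hy))
    have := Finset.card_le_card h1
    simpa using this
  · rw [Finset.card_range]


lemma aux_divmod (N k t : ℕ) (hN : 0 < N) (ht : t < N) :
    (k * N + t) / N = k ∧ (k * N + t) % N = t := by
  constructor
  · rw [Nat.add_comm, Nat.add_mul_div_right _ _ hN, Nat.div_eq_of_lt ht]; omega
  · rw [Nat.add_comm, Nat.add_mul_mod_self_right, Nat.mod_eq_of_lt ht]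

/-- The exponents `k(i)·n_a + r(i)` of the type-`a` entries of the monomial string,
for positions `i ≤ l`, form a strictly increasing enumeration of `{0, …, c−1}`,
where `c` is the number of such positions. -/
theorem stmt_4 (p : ℕ) (hp : 1 ≤ p) (n : Fin p → ℕ) (hn : ∀ a, 1 ≤ n a)
    (kk : ℕ → ℕ) (aa : ℕ → Fin p) (rr : ℕ → ℕ)
    (hdec : ∀ l, rr l < n (aa l) ∧
      l = kk l * (∑ b, n b) +
          (∑ i ∈ Finset.univ.filter (fun i => i < aa l), n i) + rr l)
    (a : Fin p) (l : ℕ)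
    (T : Finset ℕ) (hT : T = (Finset.range (l + 1)).filter (fun i => aa i = a))
    (f : ℕ → ℕ) (hf : ∀ i, f i = kk i * n a + rr i) :
    StrictMonoOn f ↑T ∧ Set.BijOn f ↑T ↑(Finset.range T.card) := by
  set N := ∑ b, n b with hN
  set S : Fin p → ℕ := fun b => ∑ i ∈ Finset.univ.filter (fun i => i < b), n i with hS
  -- S b + n b ≤ N
  have hSN : ∀ b : Fin p, S b + n b ≤ N := by
    intro b
    have : insert b (Finset.univ.filter (fun i => i < b)) ⊆ Finset.univ := by
      intro x _; exact Finset.mem_univ x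
    have hb : b ∉ Finset.univ.filter (fun i => i < b) := by simp
    calc S b + n b = ∑ i ∈ insert b (Finset.univ.filter (fun i => i < b)), n i := by
          rw [Finset.sum_insert hb]; ring
      _ ≤ N := Finset.sum_le_sum_of_subset this
  have hSlt : ∀ b b' : Fin p, b < b' → S b + n b ≤ S b' := by
    intro b b' hbb'
    have hsub : insert b (Finset.univ.filter (fun i => i < b)) ⊆
        Finset.univ.filter (fun i => i < b') := by
      intro x hx
      simp only [Finset.mem_insert, Finset.mem_filter, Finset.mem_univ, true_and] at hx ⊢
      rcases hx with rfl | hx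
      · exact hbb'
      · exact hx.trans hbb'
    have hb : b ∉ Finset.univ.filter (fun i => i < b) := by simp
    calc S b + n b = ∑ i ∈ insert b (Finset.univ.filter (fun i => i < b)), n i := by
          rw [Finset.sum_insert hb]; ring
      _ ≤ S b' := Finset.sum_le_sum_of_subset hsub
  -- uniqueness of decomposition
  have huniq : ∀ (k : ℕ) (b : Fin p) (r : ℕ), r < n b →
      kk (k * N + S b + r) = k ∧ aa (k * N + S b + r) = b ∧ rr (k * N + S b + r) = r := by
    intro k b r hr
    set j := k * N + S b + r with hj
    obtain ⟨hr', hj'⟩ := hdec j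
    have hbound : ∀ (b₀ : Fin p) (r₀ : ℕ), r₀ < n b₀ → S b₀ + r₀ < N := by
      intro b₀ r₀ h
      calc S b₀ + r₀ < S b₀ + n b₀ := by omega
        _ ≤ N := hSN b₀
    have h1 : S b + r < N := hbound b r hr
    have h2 : S (aa j) + rr j < N := hbound (aa j) (rr j) hr'
    have hN0 : 0 < N := by have := hSN b; omega
    have d1 := aux_divmod N k (S b + r) hN0 h1
    have d2 := aux_divmod N (kk j) (S (aa j) + rr j) hN0 h2
    have e1 : j / N = k ∧ j % N = S b + r := by
      rw [hj, Nat.add_assoc]; exact d1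
    have hj'' : j = kk j * N + (S (aa j) + rr j) := by simp only [hS]; omega
    have e2a : j / N = kk j := by
      conv_lhs => rw [hj'']
      exact d2.1
    have e2b : j % N = S (aa j) + rr j := by
      conv_lhs => rw [hj'']
      exact d2.2
    have e2 : j / N = kk j ∧ j % N = S (aa j) + rr j := ⟨e2a, e2b⟩
    have hk : kk j = k := by omega
    have heq : S (aa j) + rr j = S b + r := by omega
    have ha : aa j = b := by
      rcases lt_trichotomy (aa j) b with h | h | h
      · have := hSlt (aa j) b h
        omega
      · exact h
      · have := hSlt b (aa j) h
        omega
    refine ⟨hk, ha, ?_⟩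
    rw [ha] at heq; omega
  have hna : 1 ≤ n a := hn a
  have hnaN : n a ≤ N := Finset.single_le_sum (fun _ _ => Nat.zero_le _) (Finset.mem_univ a)
  -- the position map
  set φ : ℕ → ℕ := fun m => m / n a * N + S a + m % n a with hφ
  have hφdec : ∀ m, kk (φ m) = m / n a ∧ aa (φ m) = a ∧ rr (φ m) = m % n a := by
    intro m
    exact huniq (m / n a) a (m % n a) (Nat.mod_lt _ (by omega))
  have hfφ : ∀ m, f (φ m) = m := by
    intro m
    obtain ⟨h1, h2, h3⟩ := hφdec m
    rw [hf, h1, h3, Nat.div_add_mod']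
  have hφf : ∀ i, aa i = a → φ (f i) = i := by
    intro i hi
    obtain ⟨hri, hdi⟩ := hdec i
    rw [hi] at hri hdi
    have h1 : f i / n a = kk i := by
      rw [hf]; exact (aux_divmod (n a) (kk i) (rr i) (by omega) hri).1
    have h2 : f i % n a = rr i := by
      rw [hf]; exact (aux_divmod (n a) (kk i) (rr i) (by omega) hri).2
    rw [hφ]; simp only []
    rw [h1, h2, ← hdi]
  have hφmono : StrictMono φ := by
    intro m m' hmm'
    have hd : m / n a ≤ m' / n a := Nat.div_le_div_right (le_of_lt hmm')
    have e := Nat.div_add_mod' m (n a)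
    have e' := Nat.div_add_mod' m' (n a)
    rcases eq_or_lt_of_le hd with h | h
    · rw [h] at e
      have hm : m % n a < m' % n a := by omega
      simp only [hφ]
      rw [h]; omega
    · have hr : m % n a < n a := Nat.mod_lt _ (by omega)
      have hstep : (m / n a + 1) * N ≤ m' / n a * N :=
        Nat.mul_le_mul_right _ (by omega)
      have := hSN a
      simp only [hφ]
      calc m / n a * N + S a + m % n a < m / n a * N + N := by omega
        _ = (m / n a + 1) * N := by ring
        _ ≤ m' / n a * N := hstep
        _ ≤ m' / n a * N + S a + m' % n a := by omega
  have hφge : ∀ m, m ≤ φ m := by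
    intro m
    have e := Nat.div_add_mod' m (n a)
    have : m / n a * n a ≤ m / n a * N := Nat.mul_le_mul le_rfl hnaN
    simp only [hφ]; omega
  -- M : the indices
  set M : Finset ℕ := (Finset.range (l + 1)).filter (fun m => φ m ≤ l) with hM
  have hmemM : ∀ m, m ∈ M ↔ φ m ≤ l := by
    intro m
    simp only [hM, Finset.mem_filter, Finset.mem_range]
    constructor
    · exact fun h => h.2
    · intro h; exact ⟨by have := hφge m; omega, h⟩
  have hTeq : T = M.image φ := by
    ext i
    simp only [hT, Finset.mem_filter, Finset.mem_range, Finset.mem_image]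
    constructor
    · rintro ⟨hil, hia⟩
      refine ⟨f i, ?_, hφf i hia⟩
      rw [hmemM, hφf i hia]; omega
    · rintro ⟨m, hm, rfl⟩
      rw [hmemM] at hm
      exact ⟨by omega, (hφdec m).2.1⟩
  have hcard : T.card = M.card := by
    rw [hTeq, Finset.card_image_of_injective _ hφmono.injective]
  have hMdc : ∀ m ∈ M, ∀ m', m' ≤ m → m' ∈ M := by
    intro m hm m' hm'
    rw [hmemM] at hm ⊢
    exact le_trans (hφmono.monotone hm') hm
  have hMrange : M = Finset.range T.card := by
    rw [hcard]; exact aux_range_of_dc M hMdc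
  have haT : ∀ i ∈ T, aa i = a := by
    intro i hi; rw [hT] at hi; exact (Finset.mem_filter.mp hi).2
  have hfT : ∀ i ∈ T, f i ∈ M := by
    intro i hi
    rw [hmemM, hφf i (haT i hi)]
    rw [hT] at hi
    have := (Finset.mem_filter.mp hi).1
    rw [Finset.mem_range] at this; omega
  have hsm : StrictMonoOn f ↑T := by
    intro i hi j hj hij
    rw [← hφmono.lt_iff_lt, hφf i (haT i hi), hφf j (haT j hj)]
    exact hij
  refine ⟨hsm, ?_, ?_, ?_⟩
  · intro i hi
    simp only [Finset.coe_range, Set.mem_Iio]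
    have := hfT i hi
    rw [hMrange, Finset.mem_range] at this
    exact this
  · exact hsm.injOn
  · intro m hm
    simp only [Finset.coe_range, Set.mem_Iio] at hm
    have hmM : m ∈ M := by rw [hMrange, Finset.mem_range]; exact hm
    refine ⟨φ m, ?_, hfφ m⟩
    rw [hTeq]
    exact Finset.mem_coe.mpr (Finset.mem_image_of_mem φ hmM)
end

section
/- Let n = (n_1,…,n_p) be a composition and for l ∈ ℤ_{≥0} let k(l), a(l), r(l) denote its block index, type and offset with respect to n. Fix l ∈ ℤ_{≥0} and a ∈ {1,…,p}, and suppose the set {m : 0 ≤ m ≤ l, a(m) = a} is nonempty; denote by l_{−,a} its largest element. Then: if a < a(l), l_{−,a} = k(l)|n| + n_1 + ⋯ + n_a − 1; if a = a(l), l_{−,a} = l; and if a > a(l) (which forces k(l) ≥ 1), l_{−,a} = k(l)|n| − (n_{a+1} + ⋯ + n_p) − 1. -/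
open Finset in
private lemma stmt5_split {p : ℕ} (n : Fin p → ℕ) (a : Fin p) :
    (∑ i ∈ univ.filter (fun i => i < a), n i) + n a
      = ∑ i ∈ univ.filter (fun i => i ≤ a), n i := by
  have h : univ.filter (fun i : Fin p => i ≤ a)
      = insert a (univ.filter (fun i => i < a)) := by
    ext i
    simp [le_iff_lt_or_eq, or_comm]
  rw [h, Finset.sum_insert (by simp), add_comm]

open Finset in
private lemma stmt5_mono {p : ℕ} (n : Fin p → ℕ) {a b : Fin p} (h : a < b) :
    (∑ i ∈ univ.filter (fun i => i ≤ a), n i)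
      ≤ ∑ i ∈ univ.filter (fun i => i < b), n i := by
  apply Finset.sum_le_sum_of_subset
  intro i hi
  simp only [mem_filter, mem_univ, true_and] at *
  exact lt_of_le_of_lt hi h

open Finset in
private lemma stmt5_total {p : ℕ} (n : Fin p → ℕ) (a : Fin p) :
    (∑ i ∈ univ.filter (fun i => i ≤ a), n i)
      + (∑ i ∈ univ.filter (fun i => a < i), n i) = ∑ b, n b := by
  have h := Finset.sum_filter_add_sum_filter_not univ (fun i : Fin p => i ≤ a) n
  simpa [not_le] using h

private lemma stmt5_div {N : ℕ} (hN : 0 < N) (k v : ℕ) (hv : v < N) :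
    (k * N + v) / N = k := by
  rw [mul_comm, Nat.mul_add_div hN, Nat.div_eq_of_lt hv, add_zero]

open Finset in
private lemma stmt5_uniq {p : ℕ} (n : Fin p → ℕ) (hn : ∀ a, 1 ≤ n a)
    {k k' : ℕ} {a a' : Fin p} {r r' : ℕ} (hr : r < n a) (hr' : r' < n a')
    (h : k * (∑ b, n b) + (∑ i ∈ univ.filter (fun i => i < a), n i) + r
       = k' * (∑ b, n b) + (∑ i ∈ univ.filter (fun i => i < a'), n i) + r') :
    k = k' ∧ a = a' ∧ r = r' := by
  set N := ∑ b, n b with hNdef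
  have hN : 0 < N := lt_of_lt_of_le (hn a)
    (Finset.single_le_sum (fun i _ => Nat.zero_le (n i)) (mem_univ a))
  have hb : ∀ c : Fin p, (∑ i ∈ univ.filter (fun i => i ≤ c), n i) ≤ N :=
    fun c => Finset.sum_le_sum_of_subset (filter_subset _ _)
  have hv : (∑ i ∈ univ.filter (fun i => i < a), n i) + r < N := by
    have h1 := stmt5_split n a
    have h2 := hb a
    omega
  have hv' : (∑ i ∈ univ.filter (fun i => i < a'), n i) + r' < N := by
    have h1 := stmt5_split n a'
    have h2 := hb a'
    omega
  have hk : k = k' := by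
    have e1 : (k * N + ((∑ i ∈ univ.filter (fun i => i < a), n i) + r)) / N = k :=
      stmt5_div hN _ _ hv
    have e2 : (k' * N + ((∑ i ∈ univ.filter (fun i => i < a'), n i) + r')) / N = k' :=
      stmt5_div hN _ _ hv'
    rw [← add_assoc] at e1 e2
    rw [h] at e1
    omega
  subst hk
  have hval : (∑ i ∈ univ.filter (fun i => i < a), n i) + r
      = (∑ i ∈ univ.filter (fun i => i < a'), n i) + r' := by omega
  have ha : a = a' := by
    rcases lt_trichotomy a a' with hlt | he | hlt
    · exfalso
      have h1 := stmt5_split n a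
      have h2 := stmt5_mono n hlt
      omega
    · exact he
    · exfalso
      have h1 := stmt5_split n a'
      have h2 := stmt5_mono n hlt
      omega
  subst ha
  exact ⟨rfl, rfl, by omega⟩

/-- Explicit formula for `l_{−,a}`, the largest integer `m ≤ l` of type `a`
with respect to a composition `n` (when it exists). -/
theorem stmt_5 (p : ℕ) (hp : 1 ≤ p) (n : Fin p → ℕ) (hn : ∀ a, 1 ≤ n a)
    (kk : ℕ → ℕ) (aa : ℕ → Fin p) (rr : ℕ → ℕ)
    (hdec : ∀ l, rr l < n (aa l) ∧
      l = kk l * (∑ b, n b) +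
          (∑ i ∈ Finset.univ.filter (fun i => i < aa l), n i) + rr l)
    (l : ℕ) (a : Fin p)
    (hne : ∃ i ≤ l, aa i = a)
    (lma : ℕ)
    (hlma : lma ≤ l ∧ aa lma = a ∧ ∀ i ≤ l, aa i = a → i ≤ lma) :
    (a < aa l →
      lma + 1 = kk l * (∑ b, n b) + ∑ i ∈ Finset.univ.filter (fun i => i ≤ a), n i) ∧
    (a = aa l → lma = l) ∧
    (aa l < a →
      1 ≤ kk l ∧
      lma + (∑ i ∈ Finset.univ.filter (fun i => a < i), n i) + 1 = kk l * (∑ b, n b)) := by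
  classical
  set N := ∑ b, n b with hNdef
  obtain ⟨hlma1, hlma2, hlma3⟩ := hlma
  have hN : 0 < N := lt_of_lt_of_le (hn a)
    (Finset.single_le_sum (fun i _ => Nat.zero_le (n i)) (Finset.mem_univ a))
  have hb : ∀ c : Fin p, (∑ i ∈ Finset.univ.filter (fun i => i ≤ c), n i) ≤ N :=
    fun c => Finset.sum_le_sum_of_subset (Finset.filter_subset _ _)
  have hvm : ∀ m, (∑ i ∈ Finset.univ.filter (fun i => i < aa m), n i) + rr m < N := by
    intro m
    have h1 := stmt5_split n (aa m)
    have h2 := hb (aa m)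
    have h3 := (hdec m).1
    omega
  have hkdiv : ∀ m, kk m = m / N := by
    intro m
    have h2 := (hdec m).2
    have := stmt5_div hN (kk m) _ (hvm m)
    rw [← add_assoc] at this
    conv_rhs => rw [h2]
    exact this.symm
  have hkmono : ∀ m m', m ≤ m' → kk m ≤ kk m' := by
    intro m m' h
    rw [hkdiv m, hkdiv m']
    exact Nat.div_le_div_right h
  refine ⟨?_, ?_, ?_⟩
  · -- a < aa l
    intro hlt
    obtain ⟨hrl, hl⟩ := hdec l
    have hmono : (∑ i ∈ Finset.univ.filter (fun i => i ≤ a), n i)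
        ≤ ∑ i ∈ Finset.univ.filter (fun i => i < aa l), n i := stmt5_mono n hlt
    have hsplit := stmt5_split n a
    have hna := hn a
    set m0 := kk l * N + (∑ i ∈ Finset.univ.filter (fun i => i < a), n i) + (n a - 1)
      with hm0
    have hm0l : m0 ≤ l := by omega
    obtain ⟨hrm0, hm0dec⟩ := hdec m0
    have heq : kk m0 * N + (∑ i ∈ Finset.univ.filter (fun i => i < aa m0), n i) + rr m0
        = kk l * N + (∑ i ∈ Finset.univ.filter (fun i => i < a), n i) + (n a - 1) := by
      rw [← hm0dec]
    obtain ⟨hk0, ha0, hr0⟩ := stmt5_uniq n hn hrm0 (show n a - 1 < n a by omega) heq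
    have hub : m0 ≤ lma := hlma3 m0 hm0l ha0
    -- lma ≤ m0
    obtain ⟨hrlma, hldec⟩ := hdec lma
    rw [hlma2] at hrlma hldec
    have hkle : kk lma ≤ kk l := hkmono lma l hlma1
    have hlb : lma ≤ m0 := by
      rcases eq_or_lt_of_le hkle with he | hlt2
      · rw [he] at hldec; omega
      · have h1 : (kk lma + 1) * N ≤ kk l * N := Nat.mul_le_mul_right N (by omega)
        have h2 : (kk lma + 1) * N = kk lma * N + N := by ring
        have h3 := hb a
        omega
    omega
  · intro h
    exact le_antisymm hlma1 (hlma3 l le_rfl h.symm)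
  · -- aa l < a
    intro hlt
    obtain ⟨hrl, hl⟩ := hdec l
    have hmono : (∑ i ∈ Finset.univ.filter (fun i => i ≤ aa l), n i)
        ≤ ∑ i ∈ Finset.univ.filter (fun i => i < a), n i := stmt5_mono n hlt
    have hsplitl := stmt5_split n (aa l)
    have hsplit := stmt5_split n a
    have htot := stmt5_total n a
    have hna := hn a
    have hk1 : 1 ≤ kk l := by
      by_contra hc
      obtain ⟨i, hil, hia⟩ := hne
      obtain ⟨hri, hidec⟩ := hdec i
      rw [hia] at hri hidec
      have : kk l = 0 := by omega
      rw [this, zero_mul] at hl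
      omega
    refine ⟨hk1, ?_⟩
    have hmm : kk l * N = (kk l - 1) * N + N := by
      have h1 : kk l - 1 + 1 = kk l := Nat.succ_pred_eq_of_pos hk1
      conv_lhs => rw [← h1]
      rw [add_mul, one_mul]
    set m0 := (kk l - 1) * N + (∑ i ∈ Finset.univ.filter (fun i => i < a), n i) + (n a - 1)
      with hm0
    have hbN : (∑ i ∈ Finset.univ.filter (fun i => i < a), n i) + n a ≤ N := by
      have := hb a; omega
    have hm0l : m0 ≤ l := by omega
    obtain ⟨hrm0, hm0dec⟩ := hdec m0
    have heq : kk m0 * N + (∑ i ∈ Finset.univ.filter (fun i => i < aa m0), n i) + rr m0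
        = (kk l - 1) * N + (∑ i ∈ Finset.univ.filter (fun i => i < a), n i) + (n a - 1) := by
      rw [← hm0dec]
    obtain ⟨hk0, ha0, hr0⟩ := stmt5_uniq n hn hrm0 (show n a - 1 < n a by omega) heq
    have hub : m0 ≤ lma := hlma3 m0 hm0l ha0
    obtain ⟨hrlma, hldec⟩ := hdec lma
    rw [hlma2] at hrlma hldec
    have hkle : kk lma ≤ kk l := hkmono lma l hlma1
    have hkne : kk lma ≠ kk l := by
      intro he
      rw [he] at hldec
      omega
    have hkle' : kk lma ≤ kk l - 1 := by omega
    have hlb : lma ≤ m0 := by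
      rcases eq_or_lt_of_le hkle' with he | hlt2
      · rw [he] at hldec; omega
      · have h1 : (kk lma + 1) * N ≤ (kk l - 1) * N := Nat.mul_le_mul_right N (by omega)
        have h2 : (kk lma + 1) * N = kk lma * N + N := by ring
        omega
    omega
end

section
/- Let n = (n_1,…,n_p) be a composition and for l ∈ ℤ_{≥0} let k(l), a(l), r(l) denote its block index, type and offset with respect to n. For l ∈ ℤ_{≥0} let σ(l) denote the smallest integer m ≥ l+1 with a(m) = a(l). Then k(σ(l))·n_{a(σ(l))} + r(σ(l)) = k(l)·n_{a(l)} + r(l) + 1. Consequently, the shift matrix Υ defined by Υ_{l,j} = δ_{j,σ(l)} satisfies (Υχ)(x) = x·χ(x) componentwise, where χ is the monomial string χ^{(l)}(x) = x^{k(l)·n_{a(l)} + r(l)}. -/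
open Finset

private lemma sum_block_le {p : ℕ} (n : Fin p → ℕ) (a : Fin p) :
    (∑ i ∈ univ.filter (fun i => i < a), n i) + n a ≤ ∑ b, n b := by
  have hna : a ∉ univ.filter (fun i => i < a) := by simp
  calc (∑ i ∈ univ.filter (fun i => i < a), n i) + n a
      = ∑ i ∈ insert a (univ.filter (fun i => i < a)), n i := by
        rw [Finset.sum_insert hna]; ring
    _ ≤ ∑ b, n b := Finset.sum_le_sum_of_subset (subset_univ _)

private lemma sum_block_mono {p : ℕ} (n : Fin p → ℕ) {a a' : Fin p} (h : a < a') :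
    (∑ i ∈ univ.filter (fun i => i < a), n i) + n a
      ≤ ∑ i ∈ univ.filter (fun i => i < a'), n i := by
  have hna : a ∉ univ.filter (fun i => i < a) := by simp
  have hsub : insert a (univ.filter (fun i => i < a)) ⊆ univ.filter (fun i => i < a') := by
    intro i hi
    simp only [mem_insert, mem_filter, mem_univ, true_and] at *
    rcases hi with rfl | hi
    · exact h
    · exact hi.trans h
  calc (∑ i ∈ univ.filter (fun i => i < a), n i) + n a
      = ∑ i ∈ insert a (univ.filter (fun i => i < a)), n i := by
        rw [Finset.sum_insert hna]; ring
    _ ≤ _ := Finset.sum_le_sum_of_subset hsub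

private lemma uniq_aux {p : ℕ} (n : Fin p → ℕ)
    (k k' : ℕ) (a a' : Fin p) (r r' : ℕ) (hr : r < n a) (hr' : r' < n a')
    (h : k * (∑ b, n b) + (∑ i ∈ univ.filter (fun i => i < a), n i) + r
       = k' * (∑ b, n b) + (∑ i ∈ univ.filter (fun i => i < a'), n i) + r') :
    k = k' ∧ a = a' ∧ r = r' := by
  have hA := sum_block_le n a
  have hA' := sum_block_le n a'
  have hN : 0 < ∑ b, n b := by omega
  have hc : (∑ i ∈ univ.filter (fun i => i < a), n i) + r < ∑ b, n b := by omega
  have hc' : (∑ i ∈ univ.filter (fun i => i < a'), n i) + r' < ∑ b, n b := by omega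
  have hk : k = k' := by
    rcases lt_trichotomy k k' with h2 | h2 | h2
    · exfalso
      have h3 : (k+1) * (∑ b, n b) ≤ k' * (∑ b, n b) := Nat.mul_le_mul_right _ h2
      rw [add_mul, one_mul] at h3
      omega
    · exact h2
    · exfalso
      have h3 : (k'+1) * (∑ b, n b) ≤ k * (∑ b, n b) := Nat.mul_le_mul_right _ h2
      rw [add_mul, one_mul] at h3
      omega
  subst hk
  have hres : (∑ i ∈ univ.filter (fun i => i < a), n i) + r
      = (∑ i ∈ univ.filter (fun i => i < a'), n i) + r' := by omega
  have ha : a = a' := by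
    rcases lt_trichotomy a a' with h2 | h2 | h2
    · exfalso; have := sum_block_mono n h2; omega
    · exact h2
    · exfalso; have := sum_block_mono n h2; omega
  subst ha
  exact ⟨rfl, rfl, by omega⟩

private lemma arith_aux (N na k k2 r2 : ℕ) (hnaN : na ≤ N)
    (hr2 : r2 < na)
    (hlb : k * N + na ≤ k2 * N + r2)
    (hub : k2 * N + r2 ≤ (k+1) * N) : k2 = k + 1 ∧ r2 = 0 := by
  have hN : 0 < N := by omega
  have hk2 : ¬ (k2 ≤ k) := by
    intro h
    have h3 : k2 * N ≤ k * N := Nat.mul_le_mul_right _ h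
    omega
  have hk2' : ¬ (k + 2 ≤ k2) := by
    intro h
    have h3 : (k+2) * N ≤ k2 * N := Nat.mul_le_mul_right _ h
    rw [add_mul] at h3
    have h4 : (k+1) * N = k * N + N := by ring
    omega
  have hk : k2 = k + 1 := by omega
  subst hk
  exact ⟨rfl, by omega⟩

/-- The shift map `σ(l) = min{m ≥ l+1 : a(m) = a(l)}` raises the exponent of the
monomial string by one: `k(σ(l))·n_{a(σ(l))} + r(σ(l)) = k(l)·n_{a(l)} + r(l) + 1`;
consequently the shift matrix `Υ` satisfies `(Υχ)(x) = x·χ(x)` componentwise. -/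
theorem stmt_7 (p : ℕ) (hp : 1 ≤ p) (n : Fin p → ℕ) (hn : ∀ a, 1 ≤ n a)
    (kk : ℕ → ℕ) (aa : ℕ → Fin p) (rr : ℕ → ℕ)
    (hdec : ∀ l, rr l < n (aa l) ∧
      l = kk l * (∑ b, n b) +
          (∑ i ∈ Finset.univ.filter (fun i => i < aa l), n i) + rr l)
    (σ : ℕ → ℕ)
    (hσ : ∀ l, l + 1 ≤ σ l ∧ aa (σ l) = aa l ∧
      ∀ m, l + 1 ≤ m → aa m = aa l → σ l ≤ m)
    (l : ℕ) :
    kk (σ l) * n (aa (σ l)) + rr (σ l) = kk l * n (aa l) + rr l + 1 ∧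
    ∀ x : ℝ, x ^ (kk (σ l) * n (aa (σ l)) + rr (σ l)) = x * x ^ (kk l * n (aa l) + rr l) := by
  obtain ⟨hrl, hll⟩ := hdec l
  obtain ⟨h1, h2, h3⟩ := hσ l
  have hmain : kk (σ l) * n (aa (σ l)) + rr (σ l) = kk l * n (aa l) + rr l + 1 := by
    by_cases hcase : rr l + 1 < n (aa l)
    · -- σ l = l + 1
      obtain ⟨hr', hl'⟩ := hdec (l + 1)
      have heq : kk l * (∑ b, n b) + (∑ i ∈ Finset.univ.filter (fun i => i < aa l), n i)
            + (rr l + 1)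
          = kk (l+1) * (∑ b, n b)
            + (∑ i ∈ Finset.univ.filter (fun i => i < aa (l+1)), n i) + rr (l+1) := by
        omega
      obtain ⟨hk, ha, hr⟩ := uniq_aux n _ _ _ _ _ _ hcase hr' heq
      have hσle : σ l = l + 1 := le_antisymm (h3 (l+1) le_rfl ha.symm) h1
      rw [h2, hσle, ← hk, ← hr]
      omega
    · -- rr l + 1 = n (aa l); σ l = (kk l + 1) * N + S (aa l)
      have hc2 : rr l + 1 = n (aa l) := by omega
      set m₀ := (kk l + 1) * (∑ b, n b)
        + (∑ i ∈ Finset.univ.filter (fun i => i < aa l), n i) with hm₀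
      obtain ⟨hrm, hlm⟩ := hdec m₀
      have heq : (kk l + 1) * (∑ b, n b)
            + (∑ i ∈ Finset.univ.filter (fun i => i < aa l), n i) + 0
          = kk m₀ * (∑ b, n b)
            + (∑ i ∈ Finset.univ.filter (fun i => i < aa m₀), n i) + rr m₀ := by
        omega
      obtain ⟨hk, ha, -⟩ := uniq_aux n _ _ _ _ _ _ (by omega : 0 < n (aa l)) hrm heq
      have hSle := sum_block_le n (aa l)
      have hm₀expand : m₀ = kk l * (∑ b, n b) + (∑ b, n b)
          + (∑ i ∈ Finset.univ.filter (fun i => i < aa l), n i) := by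
        rw [hm₀]; ring
      have hle : l + 1 ≤ m₀ := by omega
      have hσle : σ l ≤ m₀ := h3 m₀ hle ha.symm
      obtain ⟨hrσ, hlσ⟩ := hdec (σ l)
      rw [h2] at hrσ hlσ
      have hlb : kk l * (∑ b, n b) + n (aa l) ≤ kk (σ l) * (∑ b, n b) + rr (σ l) := by
        omega
      have hub : kk (σ l) * (∑ b, n b) + rr (σ l) ≤ (kk l + 1) * (∑ b, n b) := by
        have : (kk l + 1) * (∑ b, n b) = kk l * (∑ b, n b) + (∑ b, n b) := by ring
        omega
      obtain ⟨hk2, hr2⟩ := arith_aux (∑ b, n b) (n (aa l)) (kk l) (kk (σ l)) (rr (σ l))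
        (by omega) hrσ hlb hub
      rw [h2, hk2, hr2, ← hc2]
      ring
  exact ⟨hmain, fun x => by rw [hmain, pow_succ, mul_comm]⟩
end

section
/- Let μ be a finite positive Borel measure on ℝ, let n₁ = (n_{1,1},…,n_{1,p₁}) and n₂ = (n_{2,1},…,n_{2,p₂}) be compositions, and let w_{1,1},…,w_{1,p₁}, w_{2,1},…,w_{2,p₂} be measurable real functions such that x ↦ x^m w_{1,a}(x) w_{2,b}(x) is μ-integrable for all m ∈ ℤ_{≥0}, a, b. Let g be the moment matrix g_{i,j} = ∫ ξ₁^{(i)}(x) ξ₂^{(j)}(x) dμ(x), where ξ_α^{(i)}(x) = w_{α,a_α(i)}(x)·x^{k_α(i)·n_{α,a_α(i)} + r_α(i)} is the weighted monomial string of composition n_α. Then g satisfies the Hankel-type symmetry Υ₁ g = g Υ₂ᵀ; explicitly, for all i, j ∈ ℤ_{≥0}: g_{σ₁(i), j} = g_{i, σ₂(j)}, where σ_α(i) = min{m ≥ i+1 : a_α(m) = a_α(i)}. -/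
open MeasureTheory


private lemma blockBound {p : ℕ} (n : Fin p → ℕ) (a : Fin p) :
    (∑ i ∈ Finset.univ.filter (fun i => i < a), n i) + n a ≤ ∑ b, n b := by
  have ha : a ∉ Finset.univ.filter (fun i => i < a) := by simp
  have h1 : ∑ i ∈ insert a (Finset.univ.filter (fun i => i < a)), n i ≤ ∑ b, n b :=
    Finset.sum_le_sum_of_subset (Finset.subset_univ _)
  rw [Finset.sum_insert ha] at h1
  omega

private lemma blockLt {p : ℕ} (n : Fin p → ℕ) {a a' : Fin p} (h : a < a') :
    (∑ i ∈ Finset.univ.filter (fun i => i < a), n i) + n a ≤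
      ∑ i ∈ Finset.univ.filter (fun i => i < a'), n i := by
  have ha : a ∉ Finset.univ.filter (fun i => i < a) := by simp
  have hsub : insert a (Finset.univ.filter (fun i => i < a)) ⊆
      Finset.univ.filter (fun i => i < a') := by
    intro x hx
    simp only [Finset.mem_insert, Finset.mem_filter, Finset.mem_univ, true_and] at hx ⊢
    rcases hx with rfl | hx
    · exact h
    · exact hx.trans h
  have h1 := Finset.sum_le_sum_of_subset (f := n) hsub
  rw [Finset.sum_insert ha] at h1
  omega

private lemma decompUniq {p : ℕ} (n : Fin p → ℕ)
    {k k' : ℕ} {a a' : Fin p} {r r' : ℕ} (hr : r < n a) (hr' : r' < n a')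
    (h : k * (∑ b, n b) + (∑ i ∈ Finset.univ.filter (fun i => i < a), n i) + r
       = k' * (∑ b, n b) + (∑ i ∈ Finset.univ.filter (fun i => i < a'), n i) + r') :
    k = k' ∧ a = a' ∧ r = r' := by
  set N := ∑ b, n b with hN
  have hbA := blockBound n a
  have hbA' := blockBound n a'
  have hk : k = k' := by
    rcases lt_trichotomy k k' with hlt | heq | hgt
    · have h1 : (k + 1) * N ≤ k' * N := Nat.mul_le_mul_right N hlt
      have h2 : (k + 1) * N = k * N + N := by ring
      omega
    · exact heq
    · have h1 : (k' + 1) * N ≤ k * N := Nat.mul_le_mul_right N hgt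
      have h2 : (k' + 1) * N = k' * N + N := by ring
      omega
  subst hk
  have h2 : (∑ i ∈ Finset.univ.filter (fun i => i < a), n i) + r
      = (∑ i ∈ Finset.univ.filter (fun i => i < a'), n i) + r' := by omega
  have ha : a = a' := by
    rcases lt_trichotomy a a' with hlt | heq | hgt
    · have := blockLt n hlt; omega
    · exact heq
    · have := blockLt n hgt; omega
  subst ha
  exact ⟨rfl, rfl, by omega⟩

private lemma stepExp {p : ℕ} (n : Fin p → ℕ)
    (kk : ℕ → ℕ) (aa : ℕ → Fin p) (rr : ℕ → ℕ)
    (hdec : ∀ l, rr l < n (aa l) ∧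
      l = kk l * (∑ b, n b) +
          (∑ i ∈ Finset.univ.filter (fun i => i < aa l), n i) + rr l)
    (σ : ℕ → ℕ)
    (hσ : ∀ l, l + 1 ≤ σ l ∧ aa (σ l) = aa l ∧
      ∀ m, l + 1 ≤ m → aa m = aa l → σ l ≤ m)
    (l : ℕ) :
    kk (σ l) * n (aa (σ l)) + rr (σ l) = kk l * n (aa l) + rr l + 1 := by
  set N := ∑ b, n b with hN
  obtain ⟨hrl, hl⟩ := hdec l
  obtain ⟨hσge, hσa, hσmin⟩ := hσ l
  by_cases hcase : rr l + 1 < n (aa l)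
  · -- σ l = l + 1
    obtain ⟨hrm, hm⟩ := hdec (l + 1)
    have heq : kk (l+1) * N + (∑ i ∈ Finset.univ.filter (fun i => i < aa (l+1)), n i) + rr (l+1)
        = kk l * N + (∑ i ∈ Finset.univ.filter (fun i => i < aa l), n i) + (rr l + 1) := by
      omega
    obtain ⟨hk, ha, hr⟩ := decompUniq n hrm hcase heq
    have hσeq : σ l = l + 1 := le_antisymm (hσmin (l+1) le_rfl ha) hσge
    rw [hσeq, ha, hk, hr]; omega
  · -- rr l + 1 = n (aa l); σ l = (kk l + 1) * N + block start
    have hna : rr l + 1 = n (aa l) := by omega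
    set S := ∑ i ∈ Finset.univ.filter (fun i => i < aa l), n i with hS
    have hbb := blockBound n (aa l)
    set m := (kk l + 1) * N + S with hm_def
    have hm1 : m = kk l * N + N + S := by rw [hm_def]; ring
    have hmge : l + 1 ≤ m := by omega
    obtain ⟨hrm, hmdec⟩ := hdec m
    have heq : kk m * N + (∑ i ∈ Finset.univ.filter (fun i => i < aa m), n i) + rr m
        = (kk l + 1) * N + S + 0 := by omega
    have hz : 0 < n (aa l) := by omega
    obtain ⟨hk, ha, hr⟩ := decompUniq n hrm hz heq
    -- minimality: σ l = m
    obtain ⟨hrs, hsdec⟩ := hdec (σ l)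
    rw [hσa] at hrs hsdec
    have hks : kk l < kk (σ l) := by
      by_contra hcon
      push_neg at hcon
      have h1 : kk (σ l) * N ≤ kk l * N := Nat.mul_le_mul_right N hcon
      omega
    have h2 : (kk l + 1) * N ≤ kk (σ l) * N := Nat.mul_le_mul_right N hks
    have hσm : σ l = m := le_antisymm (hσmin m hmge ha) (by omega)
    rw [hσm, ha, hk, hr]
    have h3 : (kk l + 1) * n (aa l) = kk l * n (aa l) + n (aa l) := by ring
    omega

/-- The moment matrix `g_{i,j} = ∫ ξ₁⁽ⁱ⁾ ξ₂⁽ʲ⁾ dμ` of multiple orthogonality of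
mixed type satisfies the Hankel-type symmetry `Υ₁ g = g Υ₂ᵀ`, i.e.
`g_{σ₁(i),j} = g_{i,σ₂(j)}`. -/
theorem stmt_8 (μ : Measure ℝ) [IsFiniteMeasure μ]
    (p₁ p₂ : ℕ) (hp₁ : 1 ≤ p₁) (hp₂ : 1 ≤ p₂)
    (n₁ : Fin p₁ → ℕ) (hn₁ : ∀ a, 1 ≤ n₁ a)
    (n₂ : Fin p₂ → ℕ) (hn₂ : ∀ b, 1 ≤ n₂ b)
    (w₁ : Fin p₁ → ℝ → ℝ) (w₂ : Fin p₂ → ℝ → ℝ)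
    (hw₁ : ∀ a, Measurable (w₁ a)) (hw₂ : ∀ b, Measurable (w₂ b))
    (hint : ∀ (m : ℕ) (a : Fin p₁) (b : Fin p₂),
      Integrable (fun x => x ^ m * w₁ a x * w₂ b x) μ)
    (kk₁ : ℕ → ℕ) (aa₁ : ℕ → Fin p₁) (rr₁ : ℕ → ℕ)
    (hdec₁ : ∀ l, rr₁ l < n₁ (aa₁ l) ∧
      l = kk₁ l * (∑ b, n₁ b) +
          (∑ i ∈ Finset.univ.filter (fun i => i < aa₁ l), n₁ i) + rr₁ l)
    (kk₂ : ℕ → ℕ) (aa₂ : ℕ → Fin p₂) (rr₂ : ℕ → ℕ)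
    (hdec₂ : ∀ l, rr₂ l < n₂ (aa₂ l) ∧
      l = kk₂ l * (∑ b, n₂ b) +
          (∑ i ∈ Finset.univ.filter (fun i => i < aa₂ l), n₂ i) + rr₂ l)
    (σ₁ : ℕ → ℕ)
    (hσ₁ : ∀ l, l + 1 ≤ σ₁ l ∧ aa₁ (σ₁ l) = aa₁ l ∧
      ∀ m, l + 1 ≤ m → aa₁ m = aa₁ l → σ₁ l ≤ m)
    (σ₂ : ℕ → ℕ)
    (hσ₂ : ∀ l, l + 1 ≤ σ₂ l ∧ aa₂ (σ₂ l) = aa₂ l ∧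
      ∀ m, l + 1 ≤ m → aa₂ m = aa₂ l → σ₂ l ≤ m)
    (ξ₁ : ℕ → ℝ → ℝ)
    (hξ₁ : ∀ i x, ξ₁ i x = w₁ (aa₁ i) x * x ^ (kk₁ i * n₁ (aa₁ i) + rr₁ i))
    (ξ₂ : ℕ → ℝ → ℝ)
    (hξ₂ : ∀ j x, ξ₂ j x = w₂ (aa₂ j) x * x ^ (kk₂ j * n₂ (aa₂ j) + rr₂ j))
    (g : ℕ → ℕ → ℝ)
    (hg : ∀ i j, g i j = ∫ x, ξ₁ i x * ξ₂ j x ∂μ) :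
    ∀ i j, g (σ₁ i) j = g i (σ₂ j) := by
  intro i j
  have e₁ := stepExp n₁ kk₁ aa₁ rr₁ hdec₁ σ₁ hσ₁ i
  have e₂ := stepExp n₂ kk₂ aa₂ rr₂ hdec₂ σ₂ hσ₂ j
  have a₁ := (hσ₁ i).2.1
  have a₂ := (hσ₂ j).2.1
  rw [a₁] at e₁
  rw [a₂] at e₂
  rw [hg, hg]
  congr 1
  funext x
  rw [hξ₁, hξ₂, hξ₁, hξ₂, a₁, a₂, e₁, e₂, pow_succ, pow_succ]
  ring
end

section
/- Let μ, weights w_{1,a}, w_{2,b}, compositions n₁, n₂, weighted strings ξ₁, ξ₂ and the moment matrix g be as in the standard setup, with x ↦ x^m w_{1,a}(x) w_{2,b}(x) μ-integrable for all m, a, b. Let S be a semi-infinite lower unitriangular real matrix (S_{l,i} = 0 for i > l, S_{l,l} = 1) such that Sg is upper triangular, i.e. Σ_{i=0}^{l} S_{l,i} g_{i,j} = 0 for all j < l. Define the linear form Q^{(l)}(x) = Σ_{i=0}^{l} S_{l,i} ξ₁^{(i)}(x). Then for every b ∈ {1,…,p₂} and every integer k with 0 ≤ k ≤ ν_{2,b}(l−1)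 − 1, where ν_{2,b}(l−1) := #{j : 0 ≤ j ≤ l−1, a₂(j) = b}, one has ∫ Q^{(l)}(x) w_{2,b}(x) x^k dμ(x) = 0. -/
open MeasureTheory

/-- Orthogonality relations for the linear forms `Q⁽ˡ⁾ = Σ_{i≤l} S_{l,i} ξ₁⁽ⁱ⁾`
coming from a lower unitriangular `S` making `Sg` upper triangular:
`∫ Q⁽ˡ⁾(x) w_{2,b}(x) xᵏ dμ = 0` for `0 ≤ k ≤ ν_{2,b}(l−1) − 1`. -/
theorem stmt_9
    (μ : Measure ℝ) [IsFiniteMeasure μ]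
    (p₁ p₂ : ℕ) (hp₁ : 1 ≤ p₁) (hp₂ : 1 ≤ p₂)
    (n₁ : Fin p₁ → ℕ) (hn₁ : ∀ a, 1 ≤ n₁ a)
    (n₂ : Fin p₂ → ℕ) (hn₂ : ∀ b, 1 ≤ n₂ b)
    (w₁ : Fin p₁ → ℝ → ℝ) (w₂ : Fin p₂ → ℝ → ℝ)
    (hw₁ : ∀ a, Measurable (w₁ a)) (hw₂ : ∀ b, Measurable (w₂ b))
    (hint : ∀ (m : ℕ) (a : Fin p₁) (b : Fin p₂),
      Integrable (fun x => x ^ m * w₁ a x * w₂ b x) μ)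
    (kk₁ : ℕ → ℕ) (aa₁ : ℕ → Fin p₁) (rr₁ : ℕ → ℕ)
    (hdec₁ : ∀ l, rr₁ l < n₁ (aa₁ l) ∧
      l = kk₁ l * (∑ b, n₁ b) +
          (∑ i ∈ Finset.univ.filter (fun i => i < aa₁ l), n₁ i) + rr₁ l)
    (kk₂ : ℕ → ℕ) (aa₂ : ℕ → Fin p₂) (rr₂ : ℕ → ℕ)
    (hdec₂ : ∀ l, rr₂ l < n₂ (aa₂ l) ∧
      l = kk₂ l * (∑ b, n₂ b) +
          (∑ i ∈ Finset.univ.filter (fun i => i < aa₂ l), n₂ i) + rr₂ l)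
    (ξ₁ : ℕ → ℝ → ℝ)
    (hξ₁ : ∀ i x, ξ₁ i x = w₁ (aa₁ i) x * x ^ (kk₁ i * n₁ (aa₁ i) + rr₁ i))
    (ξ₂ : ℕ → ℝ → ℝ)
    (hξ₂ : ∀ j x, ξ₂ j x = w₂ (aa₂ j) x * x ^ (kk₂ j * n₂ (aa₂ j) + rr₂ j))
    (g : ℕ → ℕ → ℝ)
    (hg : ∀ i j, g i j = ∫ x, ξ₁ i x * ξ₂ j x ∂μ)
    (S : ℕ → ℕ → ℝ)
    (hS_tri : ∀ i j, i < j → S i j = 0) (hS_diag : ∀ i, S i i = 1)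
    (hSg_upper : ∀ l j, j < l → ∑ i ∈ Finset.range (l + 1), S l i * g i j = 0)
    (Q : ℕ → ℝ → ℝ)
    (hQ : ∀ l x, Q l x = ∑ i ∈ Finset.range (l + 1), S l i * ξ₁ i x)
    (l : ℕ) (b : Fin p₂) (k : ℕ)
    (hk : k < ((Finset.range l).filter (fun j => aa₂ j = b)).card) :
    ∫ x, Q l x * w₂ b x * x ^ k ∂μ = 0 := by

  classical
  set N : ℕ := ∑ c, n₂ c with hNdef
  have hnb : 0 < n₂ b := hn₂ b
  set P : Fin p₂ → ℕ := fun c => ∑ i ∈ Finset.univ.filter (fun i => i < c), n₂ i with hPdef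
  -- P c + n₂ c ≤ N
  have hPle : ∀ c : Fin p₂, P c + n₂ c ≤ N := by
    intro c
    have h1 : P c + n₂ c = ∑ i ∈ insert c (Finset.univ.filter (fun i => i < c)), n₂ i := by
      rw [Finset.sum_insert (by simp)]
      simp [hPdef, add_comm]
    rw [h1, hNdef]
    exact Finset.sum_le_sum_of_subset (Finset.subset_univ _)
  -- monotonicity
  have hPmono : ∀ c c' : Fin p₂, c < c' → P c + n₂ c ≤ P c' := by
    intro c c' hcc
    have h1 : P c + n₂ c = ∑ i ∈ insert c (Finset.univ.filter (fun i => i < c)), n₂ i := by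
      rw [Finset.sum_insert (by simp)]
      simp [hPdef, add_comm]
    rw [h1, hPdef]
    refine Finset.sum_le_sum_of_subset ?_
    intro i hi
    simp only [Finset.mem_insert, Finset.mem_filter, Finset.mem_univ, true_and] at hi ⊢
    rcases hi with rfl | hi
    · exact hcc
    · exact hi.trans hcc
  have hNpos : 0 < N := lt_of_lt_of_le hnb (le_trans (Nat.le_add_left _ _) (hPle b))
  -- uniqueness of decomposition
  have huniq : ∀ (q r : ℕ) (c : Fin p₂), r < n₂ c → ∀ (q' r' : ℕ) (c' : Fin p₂), r' < n₂ c' →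
      q * N + P c + r = q' * N + P c' + r' → c = c' ∧ q = q' ∧ r = r' := by
    intro q r c hr q' r' c' hr' heq
    have h1 : P c + r < N := lt_of_lt_of_le (by omega) (hPle c)
    have h2 : P c' + r' < N := lt_of_lt_of_le (by omega) (hPle c')
    have heq' : N * q + (P c + r) = N * q' + (P c' + r') := by
      rw [mul_comm N q, mul_comm N q']; omega
    have hq : q = q' := by
      have d1 : (N * q + (P c + r)) / N = q := by
        rw [Nat.mul_add_div hNpos, Nat.div_eq_of_lt h1]; omega
      have d2 : (N * q' + (P c' + r')) / N = q' := by
        rw [Nat.mul_add_div hNpos, Nat.div_eq_of_lt h2]; omega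
      rw [← d1, ← d2, heq']
    subst hq
    have h3 : P c + r = P c' + r' := by omega
    have hcc : c = c' := by
      rcases lt_trichotomy c c' with h | h | h
      · have := hPmono c c' h; omega
      · exact h
      · have := hPmono c' c h; omega
    subst hcc
    exact ⟨rfl, rfl, by omega⟩
  -- the inverse map
  set J : ℕ → ℕ := fun m => (m / n₂ b) * N + P b + (m % n₂ b) with hJdef
  have hJ : ∀ m, aa₂ (J m) = b ∧ kk₂ (J m) = m / n₂ b ∧ rr₂ (J m) = m % n₂ b := by
    intro m
    obtain ⟨h1, h2⟩ := hdec₂ (J m)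
    have heq : kk₂ (J m) * N + P (aa₂ (J m)) + rr₂ (J m)
        = (m / n₂ b) * N + P b + (m % n₂ b) := by
      rw [← h2]
    exact huniq _ _ _ h1 _ _ _ (Nat.mod_lt m hnb) heq
  have he : ∀ j, aa₂ j = b → J (kk₂ j * n₂ b + rr₂ j) = j := by
    intro j hj
    obtain ⟨h1, h2⟩ := hdec₂ j
    rw [hj] at h1 h2
    have hd : (kk₂ j * n₂ b + rr₂ j) / n₂ b = kk₂ j := by
      rw [mul_comm, Nat.mul_add_div hnb, Nat.div_eq_of_lt h1]; omega
    have hm : (kk₂ j * n₂ b + rr₂ j) % n₂ b = rr₂ j := by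
      rw [mul_comm, Nat.mul_add_mod, Nat.mod_eq_of_lt h1]
    simp only [hJdef, hd, hm]
    exact h2.symm
  -- J is strictly monotone
  have hJmono : StrictMono J := by
    intro m m' hmm
    have hdle : m / n₂ b ≤ m' / n₂ b := Nat.div_le_div_right hmm.le
    rcases eq_or_lt_of_le hdle with hde | hdlt
    · have hml : m % n₂ b < m' % n₂ b := by
        have e1 := Nat.div_add_mod m (n₂ b)
        have e2 := Nat.div_add_mod m' (n₂ b)
        rw [← hde] at e2
        omega
      simp only [hJdef]
      rw [hde]
      exact Nat.add_lt_add_left hml _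
    · simp only [hJdef]
      calc m / n₂ b * N + P b + m % n₂ b
          < m / n₂ b * N + P b + n₂ b := Nat.add_lt_add_left (Nat.mod_lt m hnb) _
        _ ≤ m / n₂ b * N + N := by rw [add_assoc]; exact Nat.add_le_add_left (hPle b) _
        _ = (m / n₂ b + 1) * N := by ring
        _ ≤ m' / n₂ b * N := Nat.mul_le_mul_right N hdlt
        _ ≤ m' / n₂ b * N + P b + m' % n₂ b := by rw [add_assoc]; exact Nat.le_add_right _ _
  -- J k < l
  have hJk_lt : J k < l := by
    by_contra h
    push_neg at h
    have key : ∀ j ∈ (Finset.range l).filter (fun j => aa₂ j = b),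
        kk₂ j * n₂ b + rr₂ j ∈ Finset.range k := by
      intro j hj
      simp only [Finset.mem_filter, Finset.mem_range] at hj ⊢
      have hlt : J (kk₂ j * n₂ b + rr₂ j) < J k := by
        rw [he j hj.2]; exact lt_of_lt_of_le hj.1 h
      exact hJmono.lt_iff_lt.mp hlt
    have hinj : Set.InjOn (fun j => kk₂ j * n₂ b + rr₂ j)
        ((Finset.range l).filter (fun j => aa₂ j = b)) := by
      intro j hj j' hj' hee
      simp only [Finset.coe_filter, Set.mem_setOf_eq, Finset.mem_range] at hj hj'
      have := he j hj.2
      have := he j' hj'.2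
      simp only at hee
      rw [← he j hj.2, ← he j' hj'.2, hee]
    have hcard := Finset.card_le_card_of_injOn _ key hinj
    simp only [Finset.card_range] at hcard
    omega
  -- the key index j₀
  obtain ⟨hab, hkb, hrb⟩ := hJ k
  have hξ : ∀ x : ℝ, ξ₂ (J k) x = w₂ b x * x ^ k := by
    intro x
    have hdm : k / n₂ b * n₂ b + k % n₂ b = k := Nat.div_add_mod' k (n₂ b)
    rw [hξ₂, hab, hkb, hrb, hdm]
  -- integrability
  have hterm : ∀ i : ℕ, Integrable (fun x => S l i * (ξ₁ i x * ξ₂ (J k) x)) μ := by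
    intro i
    have h1 : Integrable (fun x => ξ₁ i x * ξ₂ (J k) x) μ := by
      refine (hint (kk₁ i * n₁ (aa₁ i) + rr₁ i + k) (aa₁ i) b).congr
        (Filter.Eventually.of_forall fun x => ?_)
      simp only [hξ₁, hξ, pow_add]; ring
    exact h1.const_mul _
  -- final computation
  calc ∫ x, Q l x * w₂ b x * x ^ k ∂μ
      = ∫ x, ∑ i ∈ Finset.range (l + 1), S l i * (ξ₁ i x * ξ₂ (J k) x) ∂μ := by
        congr 1
        funext x
        rw [hQ l x, Finset.sum_mul, Finset.sum_mul]
        refine Finset.sum_congr rfl fun i _ => ?_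
        rw [hξ x]; ring
    _ = ∑ i ∈ Finset.range (l + 1), ∫ x, S l i * (ξ₁ i x * ξ₂ (J k) x) ∂μ :=
        integral_finset_sum _ fun i _ => hterm i
    _ = ∑ i ∈ Finset.range (l + 1), S l i * g i (J k) := by
        refine Finset.sum_congr rfl fun i _ => ?_
        rw [MeasureTheory.integral_const_mul, hg]
    _ = 0 := hSg_upper l (J k) hJk_lt
end

section
/- Let n₁, n₂ be compositions with shift maps σ₁, σ₂ (σ_α(l) = min{m ≥ l+1 : a_α(m) = a_α(l)}). Let g be a semi-infinite real matrix satisfying the Hankel-type symmetry g_{σ₁(i),j} = g_{i,σ₂(j)} for all i, j. Let S, S' be mutually inverse lower unitriangular matrices and S̄, S̄' mutually inverse upper triangular matrices such that g = S'S̄ entrywise, i.e. g_{i,j} = Σ_k S'_{i,k} S̄_{k,j} (finite sums), equivalently Sg = S̄. Then SΥ₁S' = S̄Υ₂ᵀS̄' entrywise; explicitly, for all l, m: Σ_{i=0}^{l} S_{l,i} S'_{σ₁(i),m} = Σ_j S̄_{l,σ₂(j)} S̄'_{j,m}, both sides being finite sums. -/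
/-- Equality of the two expressions for the Jacobi-type matrix:
if `g` satisfies the Hankel-type symmetry `Υ₁g = gΥ₂ᵀ` and has the Gauss--Borel
factorization `g = S⁻¹S̄`, then `SΥ₁S⁻¹ = S̄Υ₂ᵀS̄⁻¹` entrywise. -/
theorem stmt_14 (p₁ p₂ : ℕ) (hp₁ : 1 ≤ p₁) (hp₂ : 1 ≤ p₂)
    (n₁ : Fin p₁ → ℕ) (hn₁ : ∀ a, 1 ≤ n₁ a)
    (n₂ : Fin p₂ → ℕ) (hn₂ : ∀ b, 1 ≤ n₂ b)
    (kk₁ : ℕ → ℕ) (aa₁ : ℕ → Fin p₁) (rr₁ : ℕ → ℕ)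
    (hdec₁ : ∀ l, rr₁ l < n₁ (aa₁ l) ∧
      l = kk₁ l * (∑ b, n₁ b) +
          (∑ i ∈ Finset.univ.filter (fun i => i < aa₁ l), n₁ i) + rr₁ l)
    (kk₂ : ℕ → ℕ) (aa₂ : ℕ → Fin p₂) (rr₂ : ℕ → ℕ)
    (hdec₂ : ∀ l, rr₂ l < n₂ (aa₂ l) ∧
      l = kk₂ l * (∑ b, n₂ b) +
          (∑ i ∈ Finset.univ.filter (fun i => i < aa₂ l), n₂ i) + rr₂ l)
    (σ₁ : ℕ → ℕ)
    (hσ₁ : ∀ l, l + 1 ≤ σ₁ l ∧ aa₁ (σ₁ l) = aa₁ l ∧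
      ∀ m, l + 1 ≤ m → aa₁ m = aa₁ l → σ₁ l ≤ m)
    (σ₂ : ℕ → ℕ)
    (hσ₂ : ∀ l, l + 1 ≤ σ₂ l ∧ aa₂ (σ₂ l) = aa₂ l ∧
      ∀ m, l + 1 ≤ m → aa₂ m = aa₂ l → σ₂ l ≤ m)
    (g : ℕ → ℕ → ℝ)
    (hsym : ∀ i j, g (σ₁ i) j = g i (σ₂ j))
    (S S' : ℕ → ℕ → ℝ)
    (hS_tri : ∀ i j, i < j → S i j = 0) (hS_diag : ∀ i, S i i = 1)
    (hS'_tri : ∀ i j, i < j → S' i j = 0) (hS'_diag : ∀ i, S' i i = 1)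
    (hinv₁ : ∀ l m, ∑ k ∈ Finset.range (max l m + 1), S l k * S' k m =
      if l = m then 1 else 0)
    (hinv₂ : ∀ l m, ∑ k ∈ Finset.range (max l m + 1), S' l k * S k m =
      if l = m then 1 else 0)
    (Sbar Sbar' : ℕ → ℕ → ℝ)
    (hSbar_tri : ∀ i j, j < i → Sbar i j = 0)
    (hSbar'_tri : ∀ i j, j < i → Sbar' i j = 0)
    (hinv₃ : ∀ l m, ∑ k ∈ Finset.range (max l m + 1), Sbar l k * Sbar' k m =
      if l = m then 1 else 0)
    (hinv₄ : ∀ l m, ∑ k ∈ Finset.range (max l m + 1), Sbar' l k * Sbar k m =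
      if l = m then 1 else 0)
    (hfact : ∀ i j, g i j = ∑ k ∈ Finset.range (min i j + 1), S' i k * Sbar k j) :
    ∀ l m, ∑ i ∈ Finset.range (l + 1), S l i * S' (σ₁ i) m =
      ∑ j ∈ Finset.range (m + 1), Sbar l (σ₂ j) * Sbar' j m := by

  -- `∑_{i ≤ l} S l i * S' i k = δ_{l k}` (truncated version of `hinv₁`)
  have key1 : ∀ l k, (∑ i ∈ Finset.range (l + 1), S l i * S' i k) =
      if l = k then 1 else 0 := by
    intro l k
    rw [← hinv₁ l k]
    apply Finset.sum_subset
    · exact Finset.range_subset_range.2 (by omega)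
    · intro i hi hni
      simp only [Finset.mem_range, not_lt] at hni
      rw [hS_tri l i (by omega), zero_mul]
  -- `∑_{k ≤ m} Sbar t k * Sbar' k m = δ_{t m}` (truncated version of `hinv₃`)
  have key3 : ∀ t m, (∑ k ∈ Finset.range (m + 1), Sbar t k * Sbar' k m) =
      if t = m then 1 else 0 := by
    intro t m
    rw [← hinv₃ t m]
    apply Finset.sum_subset
    · exact Finset.range_subset_range.2 (by omega)
    · intro k hk hnk
      simp only [Finset.mem_range, not_lt] at hnk
      rw [hSbar'_tri k m (by omega), mul_zero]
  -- Lemma A : `S g = Sbar`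
  have lemA : ∀ l j, (∑ i ∈ Finset.range (l + 1), S l i * g i j) = Sbar l j := by
    intro l j
    have h1 : ∀ i ∈ Finset.range (l + 1), S l i * g i j =
        ∑ k ∈ Finset.range (max l j + 1), S l i * (S' i k * Sbar k j) := by
      intro i hi
      simp only [Finset.mem_range] at hi
      rw [hfact, Finset.mul_sum]
      apply Finset.sum_subset
      · exact Finset.range_subset_range.2 (by omega)
      · intro k hk hnk
        simp only [Finset.mem_range, not_lt] at hnk
        rcases lt_or_ge i k with hik | hik
        · rw [hS'_tri i k hik, zero_mul, mul_zero]
        · rw [hSbar_tri k j (by omega), mul_zero, mul_zero]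
    rw [Finset.sum_congr rfl h1, Finset.sum_comm]
    have h2 : ∀ k ∈ Finset.range (max l j + 1),
        (∑ i ∈ Finset.range (l + 1), S l i * (S' i k * Sbar k j)) =
        (if l = k then 1 else 0) * Sbar k j := by
      intro k hk
      rw [← key1 l k, Finset.sum_mul]
      exact Finset.sum_congr rfl fun i _ => (mul_assoc _ _ _).symm
    rw [Finset.sum_congr rfl h2]
    have : (∑ k ∈ Finset.range (max l j + 1),
        (if l = k then 1 else 0) * Sbar k j) =
        ∑ k ∈ Finset.range (max l j + 1),
        (if l = k then Sbar k j else 0) := by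
      apply Finset.sum_congr rfl
      intro k _
      by_cases h : l = k <;> simp [h]
    rw [this, Finset.sum_ite_eq]
    simp [Nat.lt_succ_iff, le_max_left]
  -- Lemma B : `g Sbar' = S'`
  have lemB : ∀ i m, (∑ k ∈ Finset.range (m + 1), g i k * Sbar' k m) = S' i m := by
    intro i m
    have h1 : ∀ k ∈ Finset.range (m + 1), g i k * Sbar' k m =
        ∑ t ∈ Finset.range (max i m + 1), S' i t * Sbar t k * Sbar' k m := by
      intro k hk
      simp only [Finset.mem_range] at hk
      rw [hfact, Finset.sum_mul]
      apply Finset.sum_subset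
      · exact Finset.range_subset_range.2 (by omega)
      · intro t ht hnt
        simp only [Finset.mem_range, not_lt] at hnt
        rcases lt_or_ge i t with hit | hit
        · rw [hS'_tri i t hit, zero_mul, zero_mul]
        · rw [hSbar_tri t k (by omega), mul_zero, zero_mul]
    rw [Finset.sum_congr rfl h1, Finset.sum_comm]
    have h2 : ∀ t ∈ Finset.range (max i m + 1),
        (∑ k ∈ Finset.range (m + 1), S' i t * Sbar t k * Sbar' k m) =
        S' i t * (if t = m then 1 else 0) := by
      intro t _
      rw [← key3 t m, Finset.mul_sum]
      exact Finset.sum_congr rfl fun k _ => (mul_assoc _ _ _)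
    rw [Finset.sum_congr rfl h2]
    have : (∑ t ∈ Finset.range (max i m + 1),
        S' i t * (if t = m then 1 else 0)) =
        ∑ t ∈ Finset.range (max i m + 1), (if t = m then S' i t else 0) := by
      apply Finset.sum_congr rfl
      intro t _
      by_cases h : t = m <;> simp [h]
    rw [this, Finset.sum_ite_eq']
    simp [Nat.lt_succ_iff, le_max_right]
  -- Main computation
  intro l m
  have step1 : (∑ i ∈ Finset.range (l + 1), S l i * S' (σ₁ i) m) =
      ∑ i ∈ Finset.range (l + 1), ∑ k ∈ Finset.range (m + 1),
        S l i * g i (σ₂ k) * Sbar' k m := by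
    apply Finset.sum_congr rfl
    intro i _
    rw [← lemB (σ₁ i) m, Finset.mul_sum]
    apply Finset.sum_congr rfl
    intro k _
    rw [hsym i k, mul_assoc]
  rw [step1, Finset.sum_comm]
  apply Finset.sum_congr rfl
  intro k _
  rw [← lemA l (σ₂ k), Finset.sum_mul]
end

section
/- Let J be a semi-infinite real matrix which is banded, i.e. there is N ∈ ℕ with J_{i,j} = 0 whenever |i − j| > N. Let q, q̄ : ℤ_{≥0} → ℝ be sequences and x, y ∈ ℝ scalars such that Σ_j J_{i,j} q_j = y·q_i for all i and Σ_i q̄_i J_{i,j} = x·q̄_j for all j (all sums finite by bandedness). Then for every l ∈ ℤ_{≥0}: (y − x)·Σ_{k=0}^{l−1} q_k q̄_k = Σ_{i=0}^{l−1} Σ_{j≥l} q̄_i J_{i,j} q_j − Σ_{i≥l} Σ_{j=0}^{l−1} q̄_i J_{i,j} q_j, where both double sums have finitely many nonzero terms. -/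
/-- Abstract Christoffel--Darboux identity for a banded matrix `J` with left
and right eigenvectors `q̄`, `q`:
`(y − x)·Σ_{k<l} q_k q̄_k = Σ_{i<l} Σ_{j≥l} q̄_i J_{i,j} q_j − Σ_{j<l} Σ_{i≥l} q̄_i J_{i,j} q_j`,
both double sums having finitely many nonzero terms. -/
theorem stmt_16 (J : ℕ → ℕ → ℝ) (N : ℕ)
    (hband : ∀ i j : ℕ, (N < i - j ∨ N < j - i) → J i j = 0)
    (q qbar : ℕ → ℝ) (x y : ℝ)
    (hq : ∀ i, ∑ᶠ j, J i j * q j = y * q i)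
    (hqbar : ∀ j, ∑ᶠ i, qbar i * J i j = x * qbar j)
    (l : ℕ) :
    {ij : ℕ × ℕ | ij.1 < l ∧ l ≤ ij.2 ∧ qbar ij.1 * J ij.1 ij.2 * q ij.2 ≠ 0}.Finite ∧
    {ij : ℕ × ℕ | l ≤ ij.1 ∧ ij.2 < l ∧ qbar ij.1 * J ij.1 ij.2 * q ij.2 ≠ 0}.Finite ∧
    (y - x) * ∑ k ∈ Finset.range l, q k * qbar k =
      (∑ i ∈ Finset.range l, ∑ᶠ j ∈ Set.Ici l, qbar i * J i j * q j) -
      (∑ j ∈ Finset.range l, ∑ᶠ i ∈ Set.Ici l, qbar i * J i j * q j) := by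
  have hJ : ∀ i j : ℕ, J i j ≠ 0 → j ≤ i + N ∧ i ≤ j + N := by
    intro i j h
    constructor <;> by_contra hc <;> exact h (hband i j (by omega))
  set M := l + N with hM
  have hlM : l ≤ M := by omega
  refine ⟨?_, ?_, ?_⟩
  · apply Set.Finite.subset (Finset.range l ×ˢ Finset.Ico l M : Finset (ℕ × ℕ)).finite_toSet
    rintro ⟨i, j⟩ ⟨hi, hjl, hne⟩
    have hJne : J i j ≠ 0 := fun h => hne (by simp [h])
    have := hJ i j hJne
    simp only [Finset.coe_product, Set.mem_prod, Finset.mem_coe, Finset.mem_range,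
      Finset.mem_Ico]
    omega
  · apply Set.Finite.subset (Finset.Ico l M ×ˢ Finset.range l : Finset (ℕ × ℕ)).finite_toSet
    rintro ⟨i, j⟩ ⟨hi, hjl, hne⟩
    have hJne : J i j ≠ 0 := fun h => hne (by simp [h])
    have := hJ i j hJne
    simp only [Finset.coe_product, Set.mem_prod, Finset.mem_coe, Finset.mem_range,
      Finset.mem_Ico]
    omega
  · have hrow : ∀ i ∈ Finset.range l,
        ∑ j ∈ Finset.range M, qbar i * J i j * q j = qbar i * (y * q i) := by
      intro i hi
      simp only [Finset.mem_range] at hi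
      have h1 : ∑ᶠ j, J i j * q j = ∑ j ∈ Finset.range M, J i j * q j := by
        apply finsum_eq_sum_of_support_subset
        intro j hj
        simp only [Function.mem_support] at hj
        have hJne : J i j ≠ 0 := fun h => hj (by simp [h])
        have := hJ i j hJne
        simp only [Finset.coe_range, Set.mem_Iio]
        omega
      calc ∑ j ∈ Finset.range M, qbar i * J i j * q j
          = qbar i * ∑ j ∈ Finset.range M, J i j * q j := by
            rw [Finset.mul_sum]; simp [mul_assoc]
        _ = qbar i * (y * q i) := by rw [← h1, hq i]
    have hcol : ∀ j ∈ Finset.range l,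
        ∑ i ∈ Finset.range M, qbar i * J i j * q j = x * qbar j * q j := by
      intro j hj
      simp only [Finset.mem_range] at hj
      have h1 : ∑ᶠ i, qbar i * J i j = ∑ i ∈ Finset.range M, qbar i * J i j := by
        apply finsum_eq_sum_of_support_subset
        intro i hi
        simp only [Function.mem_support] at hi
        have hJne : J i j ≠ 0 := fun h => hi (by simp [h])
        have := hJ i j hJne
        simp only [Finset.coe_range, Set.mem_Iio]
        omega
      calc ∑ i ∈ Finset.range M, qbar i * J i j * q j
          = (∑ i ∈ Finset.range M, qbar i * J i j) * q j := by
            rw [Finset.sum_mul]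
        _ = x * qbar j * q j := by rw [← h1, hqbar j]
    have hIci1 : ∀ i ∈ Finset.range l,
        ∑ᶠ j ∈ Set.Ici l, qbar i * J i j * q j
          = ∑ j ∈ Finset.Ico l M, qbar i * J i j * q j := by
      intro i hi
      simp only [Finset.mem_range] at hi
      apply finsum_mem_eq_sum_of_inter_support_eq
      ext j
      simp only [Set.mem_inter_iff, Set.mem_Ici, Function.mem_support, Finset.coe_Ico,
        Set.mem_Ico]
      constructor
      · rintro ⟨hjl, hne⟩
        have hJne : J i j ≠ 0 := fun h => hne (by simp [h])
        have := hJ i j hJne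
        exact ⟨⟨hjl, by omega⟩, hne⟩
      · rintro ⟨⟨hjl, _⟩, hne⟩; exact ⟨hjl, hne⟩
    have hIci2 : ∀ j ∈ Finset.range l,
        ∑ᶠ i ∈ Set.Ici l, qbar i * J i j * q j
          = ∑ i ∈ Finset.Ico l M, qbar i * J i j * q j := by
      intro j hj
      simp only [Finset.mem_range] at hj
      apply finsum_mem_eq_sum_of_inter_support_eq
      ext i
      simp only [Set.mem_inter_iff, Set.mem_Ici, Function.mem_support, Finset.coe_Ico,
        Set.mem_Ico]
      constructor
      · rintro ⟨hil, hne⟩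
        have hJne : J i j ≠ 0 := fun h => hne (by simp [h])
        have := hJ i j hJne
        exact ⟨⟨hil, by omega⟩, hne⟩
      · rintro ⟨⟨hil, _⟩, hne⟩; exact ⟨hil, hne⟩
    rw [Finset.sum_congr rfl hIci1, Finset.sum_congr rfl hIci2]
    have hsplit1 : ∀ i : ℕ, ∑ j ∈ Finset.Ico l M, qbar i * J i j * q j
        = ∑ j ∈ Finset.range M, qbar i * J i j * q j
          - ∑ j ∈ Finset.range l, qbar i * J i j * q j :=
      fun i => Finset.sum_Ico_eq_sub _ hlM
    have hsplit2 : ∀ j : ℕ, ∑ i ∈ Finset.Ico l M, qbar i * J i j * q j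
        = ∑ i ∈ Finset.range M, qbar i * J i j * q j
          - ∑ i ∈ Finset.range l, qbar i * J i j * q j :=
      fun j => Finset.sum_Ico_eq_sub _ hlM
    simp only [hsplit1, hsplit2, Finset.sum_sub_distrib,
      Finset.sum_congr rfl hrow, Finset.sum_congr rfl hcol]
    have hAB : ∑ i ∈ Finset.range l, ∑ j ∈ Finset.range l, qbar i * J i j * q j
        = ∑ j ∈ Finset.range l, ∑ i ∈ Finset.range l, qbar i * J i j * q j :=
      Finset.sum_comm
    have hlhs : (y - x) * ∑ k ∈ Finset.range l, q k * qbar k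
        = (∑ i ∈ Finset.range l, qbar i * (y * q i))
          - ∑ j ∈ Finset.range l, x * qbar j * q j := by
      rw [Finset.mul_sum, ← Finset.sum_sub_distrib]
      exact Finset.sum_congr rfl fun k _ => by ring
    rw [hlhs, hAB]
    ring
end

section
/- Let μ be a finite positive Borel measure on ℝ, n₁, n₂ compositions of lengths p₁, p₂, and w_{1,a}, w_{2,b} measurable weights with x ↦ x^m w_{1,a}(x)w_{2,b}(x) μ-integrable for all m, a, b. Let g be the moment matrix g_{i,j} = ∫ ξ₁^{(i)} ξ₂^{(j)} dμ, and let S, S' be mutually inverse lower unitriangular matrices and S̄, S̄' mutually inverse upper triangular matrices with Sg = S̄ entrywise. Set Q^{(i)}(y) = Σ_{m≤i} S_{i,m} ξ₁^{(m)}(y), Q̄^{(j)}(x) = Σ_{m≤j} S̄'_{m,j} ξ₂^{(m)}(x), K^{[l]}(x,y) = Σ_{k=0}^{l−1} Q^{(k)}(y)Q̄^{(k)}(x), and J_{l,m} = Σ_{i≤l} S_{l,i} S'_{σ₁(i),m}. Writing r_α(m) for the unique element of {1,…,p_α} congruent to m mod p_α, and m_{{+,a}}, m_{{−,a}} for the smallest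 integer ≥ m, resp. largest integer ≤ m, of type a (w.r.t. n₁ for r₁-indices and n₂ for r₂-indices), define σ₁[l] = {l,…,(l)_{{+,r₁(a₁(l)−1)}}} × {(l−1)_{{−,r₁(a₁(l−1)+1)}},…,l−1} and σ₂[l] = {(l−1)_{{−,r₂(a₂(l−1)+1)}},…,l−1} × {l,…,(l)_{{+,r₂(a₂(l)−1)}}}. Then for every l ≥ max(|n₁|,|n₂|) and all x, y ∈ ℝ: (y−x)·K^{[l]}(x,y) = Σ_{(i,j)∈σ₁[l]} Q̄^{(j)}(x) J_{j,i} Q^{(i)}(y) − Σ_{(i,j)∈σ₂[l]} Q̄^{(j)}(x) J_{j,i} Q^{(i)}(y). -/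
open MeasureTheory


namespace CD17

open Finset

structure Idx (p : ℕ) where
  n : Fin p → ℕ
  hn : ∀ a, 1 ≤ n a
  aa : ℕ → Fin p
  kk : ℕ → ℕ
  rr : ℕ → ℕ
  lp : ℕ → Fin p → ℕ
  lm : ℕ → Fin p → ℕ
  hdec : ∀ l, rr l < n (aa l) ∧
    l = kk l * (∑ b, n b) + (∑ i ∈ Finset.univ.filter (fun i => i < aa l), n i) + rr l
  hlp : ∀ m a, m ≤ lp m a ∧ aa (lp m a) = a ∧ ∀ i, m ≤ i → aa i = a → lp m a ≤ i
  hlm : ∀ m a, (∃ i ≤ m, aa i = a) →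
    lm m a ≤ m ∧ aa (lm m a) = a ∧ ∀ i ≤ m, aa i = a → i ≤ lm m a

lemma val_sub_one {p : ℕ} [NeZero p] {b : Fin p} (hp : 2 ≤ p) :
    ((b - 1 : Fin p)).val = if b.val = 0 then p - 1 else b.val - 1 := by
  obtain ⟨p', rfl⟩ : ∃ p', p = p' + 1 := ⟨p - 1, by omega⟩
  rw [Fin.coe_sub_one]
  simp only [Fin.ext_iff, Fin.val_zero, Nat.add_sub_cancel]

lemma val_add_one' {p : ℕ} [NeZero p] {b : Fin p} (hp : 2 ≤ p) :
    ((b + 1 : Fin p)).val = if b.val = p - 1 then 0 else b.val + 1 := by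
  obtain ⟨p', rfl⟩ : ∃ p', p = p' + 1 := ⟨p - 1, by omega⟩
  rw [Fin.val_add_one]
  simp only [Fin.ext_iff, Fin.val_last, Nat.add_sub_cancel]

namespace Idx

variable {p : ℕ} (D : Idx p)

/-- offset of a type -/
def off (a : Fin p) : ℕ := ∑ i ∈ Finset.univ.filter (fun i => i < a), D.n i

/-- total -/
def N : ℕ := ∑ b, D.n b

lemma off_mono {a a' : Fin p} (h : a ≤ a') : D.off a ≤ D.off a' := by
  apply Finset.sum_le_sum_of_subset
  intro i hi
  simp only [mem_filter, mem_univ, true_and] at *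
  exact lt_of_lt_of_le hi h

lemma off_add_le {a a' : Fin p} (h : a < a') : D.off a + D.n a ≤ D.off a' := by
  have hsub : insert a (Finset.univ.filter (fun i => i < a)) ⊆
      Finset.univ.filter (fun i => i < a') := by
    intro i hi
    simp only [mem_insert, mem_filter, mem_univ, true_and] at *
    rcases hi with rfl | hi
    · exact h
    · exact lt_trans hi h
  have := Finset.sum_le_sum_of_subset (f := D.n) hsub
  rwa [Finset.sum_insert (by simp), add_comm] at this

lemma off_add_le_N (a : Fin p) : D.off a + D.n a ≤ D.N := by
  have hsub : insert a (Finset.univ.filter (fun i => i < a)) ⊆ Finset.univ := by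
    intro i _; simp
  have := Finset.sum_le_sum_of_subset (f := D.n) hsub
  rwa [Finset.sum_insert (by simp), add_comm] at this

lemma Npos [NeZero p] : 1 ≤ D.N := by
  have a0 : Fin p := ⟨0, Nat.pos_of_ne_zero (NeZero.ne p)⟩
  calc 1 ≤ D.n a0 := D.hn a0
    _ ≤ D.N := Finset.single_le_sum (f := D.n) (fun i _ => Nat.zero_le _) (mem_univ a0)

lemma type_unique {a a' : Fin p} {r r' : ℕ} (ha : r < D.n a) (ha' : r' < D.n a')
    (h : D.off a + r = D.off a' + r') : a = a' := by
  rcases lt_trichotomy a a' with h1 | h1 | h1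
  · have := D.off_add_le h1; omega
  · exact h1
  · have := D.off_add_le h1; omega

lemma hdec' (l : ℕ) : D.rr l < D.n (D.aa l) ∧
    l = D.kk l * D.N + D.off (D.aa l) + D.rr l := D.hdec l

private lemma dm (k s M : ℕ) (h : s < M) : (k * M + s) % M = s ∧ (k * M + s) / M = k := by
  constructor
  · rw [mul_comm, Nat.mul_add_mod, Nat.mod_eq_of_lt h]
  · rw [mul_comm, Nat.mul_add_div (by omega), Nat.div_eq_of_lt h, add_zero]

lemma dec_mod (l : ℕ) : l % D.N = D.off (D.aa l) + D.rr l ∧ l / D.N = D.kk l := by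
  obtain ⟨h1, h2⟩ := D.hdec' l
  have hlt : D.off (D.aa l) + D.rr l < D.N := by
    have := D.off_add_le_N (D.aa l); omega
  have hdm := dm (D.kk l) (D.off (D.aa l) + D.rr l) D.N hlt
  have e : D.kk l * D.N + (D.off (D.aa l) + D.rr l) = l := by omega
  rw [e] at hdm
  exact hdm

lemma mk_dec (k : ℕ) (a : Fin p) (r : ℕ) (hr : r < D.n a) :
    D.aa (k * D.N + D.off a + r) = a ∧ D.kk (k * D.N + D.off a + r) = k ∧
      D.rr (k * D.N + D.off a + r) = r := by
  have hlt : D.off a + r < D.N := by have := D.off_add_le_N a; omega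
  have hmd := dm k (D.off a + r) D.N hlt
  have e : k * D.N + (D.off a + r) = k * D.N + D.off a + r := (add_assoc _ _ _).symm
  rw [e] at hmd
  have hmd' := D.dec_mod (k * D.N + D.off a + r)
  have h1 : D.off a + r = D.off (D.aa (k * D.N + D.off a + r)) +
      D.rr (k * D.N + D.off a + r) := by rw [← hmd.1, hmd'.1]
  have haa : a = D.aa (k * D.N + D.off a + r) :=
    D.type_unique hr (D.hdec' _).1 h1
  refine ⟨haa.symm, ?_, ?_⟩
  · rw [← hmd'.2, hmd.2]
  · rw [← haa] at h1; omega

lemma aa_of_mod {l : ℕ} {a : Fin p} (h1 : D.off a ≤ l % D.N)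
    (h2 : l % D.N < D.off a + D.n a) : D.aa l = a := by
  have hN : 0 < D.N := by have := D.off_add_le_N a; have := D.hn a; omega
  have hl : l = (l / D.N) * D.N + D.off a + (l % D.N - D.off a) := by
    have h := Nat.div_add_mod l D.N
    have h2 : (l / D.N) * D.N = D.N * (l / D.N) := mul_comm _ _
    omega
  have := D.mk_dec (l / D.N) a (l % D.N - D.off a) (by omega)
  rw [← hl] at this
  exact this.1

lemma side_of_ne {l : ℕ} {a : Fin p} (h : a ≠ D.aa l) :
    D.off a + D.n a ≤ l % D.N ∨ l % D.N < D.off a := by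
  by_contra hc
  push_neg at hc
  exact h (D.aa_of_mod hc.2 hc.1).symm


lemma two_le_p' {a b : Fin p} (h : a ≠ b) : 2 ≤ p := by
  by_contra hc
  push_neg at hc
  interval_cases p
  · exact a.elim0
  · have ha := a.isLt; have hb := b.isLt
    exact h (Fin.ext (by omega))

lemma lp_self (l : ℕ) : D.lp l (D.aa l) = l :=
  le_antisymm ((D.hlp l (D.aa l)).2.2 l le_rfl rfl) (D.hlp l (D.aa l)).1

lemma exists_le {l : ℕ} (hl : D.N ≤ l + 1) (c : Fin p) : ∃ i ≤ l, D.aa i = c := by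
  refine ⟨D.off c, ?_, ?_⟩
  · have := D.off_add_le_N c; have := D.hn c; omega
  · have := D.mk_dec 0 c 0 (D.hn c)
    simpa using this.1

lemma lm_self (l : ℕ) : D.lm l (D.aa l) = l := by
  have h := D.hlm l (D.aa l) ⟨l, le_rfl, rfl⟩
  exact le_antisymm h.1 (h.2.2 l le_rfl rfl)

lemma lp_right {l : ℕ} {a : Fin p} (h : l % D.N < D.off a) :
    D.lp l a = l + (D.off a - l % D.N) := by
  have hN := Nat.div_add_mod l D.N
  obtain ⟨q, hq⟩ : ∃ q, l / D.N = q := ⟨_, rfl⟩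
  rw [hq] at hN
  have hq' : q * D.N = D.N * q := mul_comm _ _
  have hm : l + (D.off a - l % D.N) = q * D.N + D.off a + 0 := by omega
  have hmk := D.mk_dec q a 0 (D.hn a)
  rw [← hm] at hmk
  have hoff := D.off_add_le_N a
  refine le_antisymm ((D.hlp l a).2.2 _ (by omega) hmk.1) ?_
  obtain ⟨hge, haa, _⟩ := D.hlp l a
  obtain ⟨hr, hdec⟩ := D.hdec' (D.lp l a)
  rw [haa] at hr hdec
  rcases Nat.lt_or_ge (D.kk (D.lp l a)) q with hK | hK
  · exfalso
    have h2 : D.kk (D.lp l a) * D.N + D.N ≤ q * D.N := by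
      have := Nat.mul_le_mul_right D.N (by omega : D.kk (D.lp l a) + 1 ≤ q)
      calc D.kk (D.lp l a) * D.N + D.N = (D.kk (D.lp l a) + 1) * D.N := by ring
        _ ≤ q * D.N := this
    omega
  · have h2 : q * D.N ≤ D.kk (D.lp l a) * D.N := Nat.mul_le_mul_right D.N hK
    omega

lemma lp_left {l : ℕ} {a : Fin p} (h : D.off a + D.n a ≤ l % D.N) :
    D.lp l a = l + (D.N + D.off a - l % D.N) := by
  have hN := Nat.div_add_mod l D.N
  obtain ⟨q, hq⟩ : ∃ q, l / D.N = q := ⟨_, rfl⟩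
  rw [hq] at hN
  have hq' : q * D.N = D.N * q := mul_comm _ _
  have hoff := D.off_add_le_N a
  have hna := D.hn a
  have hsN : l % D.N < D.N := Nat.mod_lt _ (by omega)
  have hadd : (q + 1) * D.N = q * D.N + D.N := by ring
  have hm : l + (D.N + D.off a - l % D.N) = (q + 1) * D.N + D.off a + 0 := by omega
  have hmk := D.mk_dec (q + 1) a 0 hna
  rw [← hm] at hmk
  refine le_antisymm ((D.hlp l a).2.2 _ (by omega) hmk.1) ?_
  obtain ⟨hge, haa, _⟩ := D.hlp l a
  obtain ⟨hr, hdec⟩ := D.hdec' (D.lp l a)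
  rw [haa] at hr hdec
  rcases Nat.lt_or_ge (D.kk (D.lp l a)) (q + 1) with hK | hK
  · exfalso
    have h2 : D.kk (D.lp l a) * D.N ≤ q * D.N :=
      Nat.mul_le_mul_right D.N (by omega)
    omega
  · have h2 : (q + 1) * D.N ≤ D.kk (D.lp l a) * D.N :=
      Nat.mul_le_mul_right D.N hK
    omega

lemma lm_left {l : ℕ} {a : Fin p} (h : D.off a + D.n a ≤ l % D.N) :
    D.lm l a = l / D.N * D.N + D.off a + (D.n a - 1) := by
  have hN := Nat.div_add_mod l D.N
  have hsN : l % D.N < D.N := Nat.mod_lt _ (by have := D.off_add_le_N a; have := D.hn a; omega)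
  obtain ⟨q, hq⟩ : ∃ q, l / D.N = q := ⟨_, rfl⟩
  rw [hq] at hN ⊢
  have hq' : q * D.N = D.N * q := mul_comm _ _
  have hna := D.hn a
  have hoff := D.off_add_le_N a
  have hmk := D.mk_dec q a (D.n a - 1) (by omega)
  have hmle : q * D.N + D.off a + (D.n a - 1) ≤ l := by omega
  have hh := D.hlm l a ⟨_, hmle, hmk.1⟩
  refine le_antisymm ?_ (hh.2.2 _ hmle hmk.1)
  obtain ⟨hle, haa, _⟩ := hh
  obtain ⟨hr, hdec⟩ := D.hdec' (D.lm l a)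
  rw [haa] at hr hdec
  rcases Nat.lt_or_ge (D.kk (D.lm l a)) (q + 1) with hK | hK
  · have h2 : D.kk (D.lm l a) * D.N ≤ q * D.N :=
      Nat.mul_le_mul_right D.N (by omega)
    omega
  · exfalso
    have h2 : (q + 1) * D.N ≤ D.kk (D.lm l a) * D.N :=
      Nat.mul_le_mul_right D.N hK
    have h3 : (q + 1) * D.N = q * D.N + D.N := by ring
    omega

lemma lm_right {l : ℕ} {a : Fin p} (hl : D.N ≤ l + 1) (h : l % D.N < D.off a) :
    D.lm l a = (l / D.N - 1) * D.N + D.off a + (D.n a - 1) := by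
  have hN := Nat.div_add_mod l D.N
  have hsN : l % D.N < D.N := Nat.mod_lt _ (by have := D.off_add_le_N a; have := D.hn a; omega)
  have hna := D.hn a
  have hoff := D.off_add_le_N a
  obtain ⟨q0, hq0⟩ : ∃ q, l / D.N = q := ⟨_, rfl⟩
  rw [hq0] at hN ⊢
  have hq1 : 1 ≤ q0 := by
    by_contra hc
    have e : q0 = 0 := by omega
    rw [e, mul_zero, zero_add] at hN
    omega
  obtain ⟨q', hq⟩ : ∃ q', q0 = q' + 1 := ⟨q0 - 1, by omega⟩
  rw [hq] at hN ⊢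
  simp only [Nat.add_sub_cancel]
  have hq'' : D.N * (q' + 1) = q' * D.N + D.N := by ring
  have hmk := D.mk_dec q' a (D.n a - 1) (by omega)
  have hmle : q' * D.N + D.off a + (D.n a - 1) ≤ l := by omega
  have hh := D.hlm l a ⟨_, hmle, hmk.1⟩
  refine le_antisymm ?_ (hh.2.2 _ hmle hmk.1)
  obtain ⟨hle, haa, _⟩ := hh
  obtain ⟨hr, hdec⟩ := D.hdec' (D.lm l a)
  rw [haa] at hr hdec
  rcases Nat.lt_or_ge (D.kk (D.lm l a)) (q' + 1) with hK | hK
  · have h2 : D.kk (D.lm l a) * D.N ≤ q' * D.N :=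
      Nat.mul_le_mul_right D.N (by omega)
    omega
  · exfalso
    have h2 : (q' + 1) * D.N ≤ D.kk (D.lm l a) * D.N :=
      Nat.mul_le_mul_right D.N hK
    have h3 : (q' + 1) * D.N = q' * D.N + D.N := by ring
    omega

lemma lp_le_max [NeZero p] (l : ℕ) (a : Fin p) : D.lp l a ≤ D.lp l (D.aa l - 1) := by
  by_cases hab : a = D.aa l
  · rw [hab, D.lp_self]; exact (D.hlp l _).1
  have hp := two_le_p' hab
  have hs := (D.dec_mod l).1
  have hrl := (D.hdec' l).1
  have hsb1 : D.off (D.aa l) ≤ l % D.N := by omega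
  have hsb2 : l % D.N < D.off (D.aa l) + D.n (D.aa l) := by omega
  have hv := val_sub_one (b := D.aa l) hp
  have hlt_of_ne : ∀ a' : Fin p, D.aa l < a' → l % D.N < D.off a' := by
    intro a' h'
    have := D.off_add_le h'
    omega
  by_cases hb0 : (D.aa l).val = 0
  · rw [if_pos hb0] at hv
    -- b - 1 is the last element
    have hba : D.aa l < a := by
      rw [Fin.lt_def, hb0]
      have : a.val ≠ 0 := fun hc => hab (Fin.ext (by omega))
      omega
    have hbc : D.aa l < D.aa l - 1 := by
      rw [Fin.lt_def, hb0, hv]; omega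
    have hac : a ≤ D.aa l - 1 := by
      rw [Fin.le_def, hv]; have := a.isLt; omega
    rw [D.lp_right (hlt_of_ne a hba), D.lp_right (hlt_of_ne _ hbc)]
    have := D.off_mono hac
    omega
  · rw [if_neg hb0] at hv
    have hcb : D.aa l - 1 < D.aa l := by rw [Fin.lt_def, hv]; omega
    have hcle : D.off (D.aa l - 1) + D.n (D.aa l - 1) ≤ l % D.N := by
      have := D.off_add_le hcb; omega
    rw [D.lp_left hcle]
    rcases D.side_of_ne hab with h | h
    · -- a is left of s, so a < aa l, hence a ≤ aa l - 1
      have hab' : a < D.aa l := by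
        rcases lt_trichotomy a (D.aa l) with h' | h' | h'
        · exact h'
        · exact absurd h' hab
        · have := hlt_of_ne a h'; omega
      have hac : a ≤ D.aa l - 1 := by
        rw [Fin.le_def, hv]; rw [Fin.lt_def] at hab'; omega
      rw [D.lp_left h]
      have := D.off_mono hac
      omega
    · rw [D.lp_right h]
      have h1 := D.off_add_le_N a
      have h2 := D.hn a
      omega

lemma lp_lt [NeZero p] (l : ℕ) (a : Fin p) : D.lp l a < l + D.N := by
  have hoff := D.off_add_le_N a
  have hna := D.hn a
  by_cases hab : a = D.aa l
  · rw [hab, D.lp_self]; omega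
  rcases D.side_of_ne hab with h | h
  · rw [D.lp_left h]
    have : l % D.N < D.N := Nat.mod_lt _ (by omega)
    omega
  · rw [D.lp_right h]; omega

lemma lm_min [NeZero p] (l : ℕ) (hl : D.N ≤ l + 1) (a : Fin p) :
    D.lm l (D.aa l + 1) ≤ D.lm l a := by
  by_cases hab : a = D.aa l
  · rw [hab, D.lm_self]
    exact (D.hlm l _ (D.exists_le hl _)).1
  have hp := two_le_p' hab
  have hs := (D.dec_mod l).1
  have hrl := (D.hdec' l).1
  have hsb1 : D.off (D.aa l) ≤ l % D.N := by omega
  have hsb2 : l % D.N < D.off (D.aa l) + D.n (D.aa l) := by omega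
  have hv := val_add_one' (b := D.aa l) hp
  have hlt_of_gt : ∀ a' : Fin p, D.aa l < a' → l % D.N < D.off a' := by
    intro a' h'
    have := D.off_add_le h'
    omega
  have hle_of_lt : ∀ a' : Fin p, a' < D.aa l → D.off a' + D.n a' ≤ l % D.N := by
    intro a' h'
    have := D.off_add_le h'
    omega
  by_cases hbtop : (D.aa l).val = p - 1
  · rw [if_pos hbtop] at hv
    -- c := aa l + 1 has val 0
    have hcb : D.aa l + 1 < D.aa l := by rw [Fin.lt_def, hv]; omega
    have hc := hle_of_lt _ hcb
    -- all a ≠ aa l satisfy a < aa l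
    have hab' : a < D.aa l := by
      rw [Fin.lt_def]
      have h1 := a.isLt
      have : a.val ≠ (D.aa l).val := fun hc2 => hab (Fin.ext hc2)
      omega
    have ha := hle_of_lt _ hab'
    rw [D.lm_left hc, D.lm_left ha]
    have hoffc : D.off (D.aa l + 1) + D.n (D.aa l + 1) ≤ D.off a + D.n a := by
      rcases eq_or_ne (D.aa l + 1) a with he | hne
      · rw [he]
      · have hca : D.aa l + 1 < a := by
          rw [Fin.lt_def, hv]
          rw [Fin.lt_def] at hcb
          have : (D.aa l + 1).val ≠ a.val := fun hc2 => hne (Fin.ext hc2)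
          rw [hv] at this
          omega
        have := D.off_add_le hca
        omega
    have := D.hn (D.aa l + 1)
    have := D.hn a
    omega
  · rw [if_neg hbtop] at hv
    have hbc : D.aa l < D.aa l + 1 := by rw [Fin.lt_def, hv]; omega
    have hcgt := hlt_of_gt _ hbc
    rw [D.lm_right hl hcgt]
    have hN := Nat.div_add_mod l D.N
    obtain ⟨q0, hq0⟩ : ∃ q, l / D.N = q := ⟨_, rfl⟩
    rw [hq0] at hN ⊢
    have hql : 1 ≤ q0 := by
      by_contra hcq
      have e : q0 = 0 := by omega
      rw [e, mul_zero, zero_add] at hN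
      have h1 := D.off_add_le_N (D.aa l + 1)
      have h2 := D.hn (D.aa l + 1)
      omega
    obtain ⟨q', hq⟩ : ∃ q', q0 = q' + 1 := ⟨q0 - 1, by omega⟩
    rw [hq] at hN ⊢
    simp only [Nat.add_sub_cancel]
    have hmm : D.N * (q' + 1) = q' * D.N + D.N := by ring
    rcases D.side_of_ne hab with h | h
    · -- a left of s
      rw [D.lm_left h, hq0, hq]
      have h1 := D.off_add_le_N (D.aa l + 1)
      have h2 := D.hn (D.aa l + 1)
      have h3 : (q' + 1) * D.N = q' * D.N + D.N := by ring
      omega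
    · -- a right of s : a > aa l hence a ≥ aa l + 1
      have hab' : D.aa l < a := by
        rcases lt_trichotomy a (D.aa l) with h' | h' | h'
        · have := hle_of_lt a h'; omega
        · exact absurd h' hab
        · exact h'
      have hca : D.aa l + 1 ≤ a := by
        rw [Fin.le_def, hv]; rw [Fin.lt_def] at hab'; omega
      rw [D.lm_right hl h, hq0, hq]
      simp only [Nat.add_sub_cancel]
      have hoffc : D.off (D.aa l + 1) + D.n (D.aa l + 1) ≤ D.off a + D.n a := by
        rcases eq_or_ne (D.aa l + 1) a with he | hne
        · rw [he]
        · have hca' : D.aa l + 1 < a := lt_of_le_of_ne hca hne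
          have := D.off_add_le hca'
          have := D.hn a
          omega
      have := D.hn (D.aa l + 1)
      have := D.hn a
      omega

lemma sigma_gt (t : ℕ) : t < D.lp (t+1) (D.aa t) := (D.hlp (t+1) (D.aa t)).1

lemma sigma_aa (t : ℕ) : D.aa (D.lp (t+1) (D.aa t)) = D.aa t := (D.hlp (t+1) (D.aa t)).2.1

lemma sigma_le [NeZero p] (t : ℕ) : D.lp (t+1) (D.aa t) ≤ t + D.N := by
  obtain ⟨hr, hdec⟩ := D.hdec' t
  have hmk := D.mk_dec (D.kk t + 1) (D.aa t) (D.rr t) hr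
  have e : (D.kk t + 1) * D.N + D.off (D.aa t) + D.rr t = t + D.N := by
    have h1 : (D.kk t + 1) * D.N = D.kk t * D.N + D.N := by ring
    omega
  rw [e] at hmk
  exact (D.hlp (t+1) (D.aa t)).2.2 (t + D.N) (by have := D.Npos; omega) hmk.1

lemma sigma_exp (t : ℕ) :
    D.kk (D.lp (t+1) (D.aa t)) * D.n (D.aa t) + D.rr (D.lp (t+1) (D.aa t))
      = D.kk t * D.n (D.aa t) + D.rr t + 1 := by
  obtain ⟨hr, hdec⟩ := D.hdec' t
  rcases Nat.lt_or_ge (D.rr t + 1) (D.n (D.aa t)) with hcase | hcase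
  · have hmk := D.mk_dec (D.kk t) (D.aa t) (D.rr t + 1) hcase
    have e : D.kk t * D.N + D.off (D.aa t) + (D.rr t + 1) = t + 1 := by omega
    rw [e] at hmk
    have h1 : D.lp (t+1) (D.aa t) = t + 1 :=
      le_antisymm ((D.hlp (t+1) (D.aa t)).2.2 (t+1) le_rfl hmk.1) (D.hlp _ _).1
    rw [h1, hmk.2.1, hmk.2.2]
    omega
  · have hreq : D.rr t + 1 = D.n (D.aa t) := by omega
    have hmk := D.mk_dec (D.kk t + 1) (D.aa t) 0 (by omega)
    have hmul : (D.kk t + 1) * D.N = D.kk t * D.N + D.N := by ring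
    have hoffN := D.off_add_le_N (D.aa t)
    have htj : t + 1 ≤ (D.kk t + 1) * D.N + D.off (D.aa t) + 0 := by omega
    have hle : D.lp (t+1) (D.aa t) ≤ (D.kk t + 1) * D.N + D.off (D.aa t) + 0 :=
      (D.hlp _ _).2.2 _ htj hmk.1
    have hgeL : t + 1 ≤ D.lp (t+1) (D.aa t) := (D.hlp _ _).1
    have haaL : D.aa (D.lp (t+1) (D.aa t)) = D.aa t := (D.hlp _ _).2.1
    obtain ⟨hrL, hdecL⟩ := D.hdec' (D.lp (t+1) (D.aa t))
    rw [haaL] at hrL hdecL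
    have hge : (D.kk t + 1) * D.N + D.off (D.aa t) + 0 ≤ D.lp (t+1) (D.aa t) := by
      rcases Nat.lt_or_ge (D.kk (D.lp (t+1) (D.aa t))) (D.kk t + 1) with hK | hK
      · exfalso
        have hm2 : D.kk (D.lp (t+1) (D.aa t)) * D.N ≤ D.kk t * D.N :=
          Nat.mul_le_mul_right D.N (by omega)
        omega
      · have hm2 : (D.kk t + 1) * D.N ≤ D.kk (D.lp (t+1) (D.aa t)) * D.N :=
          Nat.mul_le_mul_right D.N hK
        omega
    have hLj := le_antisymm hle hge
    rw [hLj, hmk.2.1, hmk.2.2]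
    have h3 : (D.kk t + 1) * D.n (D.aa t) = D.kk t * D.n (D.aa t) + D.n (D.aa t) := by ring
    omega

lemma sigma_le_lp [NeZero p] {t l : ℕ} (h : t < l) :
    D.lp (t+1) (D.aa t) ≤ D.lp l (D.aa l - 1) := by
  have h1 : D.lp (t+1) (D.aa t) ≤ D.lp l (D.aa t) :=
    (D.hlp (t+1) (D.aa t)).2.2 _ (by have := (D.hlp l (D.aa t)).1; omega)
      (D.hlp l (D.aa t)).2.1
  exact le_trans h1 (D.lp_le_max l (D.aa t))

lemma sigma_lt_of_lt_lm [NeZero p] {t l : ℕ} (hN : D.N ≤ l)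
    (h : t < D.lm (l-1) (D.aa (l-1) + 1)) : D.lp (t+1) (D.aa t) < l := by
  by_contra hc
  push_neg at hc
  have hl1 : D.N ≤ (l-1) + 1 := by omega
  have hlm := D.hlm (l-1) (D.aa (l-1) + 1) (D.exists_le hl1 _)
  have ht1 : t ≤ l - 1 := by omega
  have hlma := D.hlm (l-1) (D.aa t) ⟨t, ht1, rfl⟩
  have hle : D.lm (l-1) (D.aa t) ≤ t := by
    by_contra hc2
    push_neg at hc2
    have := (D.hlp (t+1) (D.aa t)).2.2 (D.lm (l-1) (D.aa t)) (by omega) hlma.2.1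
    have := hlma.1
    omega
  have := D.lm_min (l-1) hl1 (D.aa t)
  omega

end Idx
end CD17


namespace CD17

private lemma tri_expand (S S' : ℕ → ℕ → ℝ)
    (hS_tri : ∀ i j, i < j → S i j = 0)
    (hinv : ∀ a b, ∑ k ∈ Finset.range (max a b + 1), S' a k * S k b = if a = b then 1 else 0)
    (ξ Q : ℕ → ℝ) (hQ : ∀ i, Q i = ∑ m ∈ Finset.range (i+1), S i m * ξ m)
    (t : ℕ) : ξ t = ∑ j ∈ Finset.range (t+1), S' t j * Q j := by
  have step : ∀ j ∈ Finset.range (t+1), S' t j * Q j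
      = ∑ m ∈ Finset.range (t+1), S' t j * (S j m * ξ m) := by
    intro j hj
    simp only [Finset.mem_range] at hj
    rw [hQ, Finset.mul_sum]
    apply Finset.sum_subset (Finset.range_subset_range.mpr (by omega))
    intro m hm hmj
    simp only [Finset.mem_range, not_lt] at hm hmj
    rw [hS_tri j m (by omega), zero_mul, mul_zero]
  rw [Finset.sum_congr rfl step, Finset.sum_comm]
  have step2 : ∀ m ∈ Finset.range (t+1),
      (∑ j ∈ Finset.range (t+1), S' t j * (S j m * ξ m))
        = (if t = m then 1 else 0) * ξ m := by
    intro m hm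
    simp only [Finset.mem_range] at hm
    rw [← hinv t m, max_eq_left (by omega), Finset.sum_mul]
    apply Finset.sum_congr rfl
    intro j _
    ring
  rw [Finset.sum_congr rfl step2]
  simp only [ite_mul, one_mul, zero_mul]
  rw [Finset.sum_ite_eq (Finset.range (t+1)) t ξ]
  simp

private lemma eigen (S S' J : ℕ → ℕ → ℝ) (σ : ℕ → ℕ) (Nb : ℕ)
    (hS'_tri : ∀ i j, i < j → S' i j = 0)
    (hσ : ∀ t, σ t ≤ t + Nb)
    (hJ : ∀ a b, J a b = ∑ i ∈ Finset.range (a+1), S a i * S' (σ i) b)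
    (ξ Q : ℕ → ℝ) (hQ : ∀ i, Q i = ∑ m ∈ Finset.range (i+1), S i m * ξ m)
    (hexp : ∀ j, ξ j = ∑ m ∈ Finset.range (j+1), S' j m * Q m)
    (z : ℝ) (hshift : ∀ t, z * ξ t = ξ (σ t))
    (k R : ℕ) (hR : k + Nb ≤ R) :
    z * Q k = ∑ m ∈ Finset.range (R+1), J k m * Q m := by
  rw [hQ, Finset.mul_sum]
  have step1 : ∀ t ∈ Finset.range (k+1), z * (S k t * ξ t)
      = ∑ m ∈ Finset.range (R+1), S k t * (S' (σ t) m * Q m) := by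
    intro t ht
    simp only [Finset.mem_range] at ht
    have h1 : z * (S k t * ξ t) = S k t * (z * ξ t) := by ring
    rw [h1, hshift, hexp, Finset.mul_sum]
    apply Finset.sum_subset (Finset.range_subset_range.mpr (by have := hσ t; omega))
    intro m hm hmj
    simp only [Finset.mem_range, not_lt] at hm hmj
    rw [hS'_tri (σ t) m (by omega), zero_mul, mul_zero]
  rw [Finset.sum_congr rfl step1, Finset.sum_comm]
  apply Finset.sum_congr rfl
  intro m _
  rw [hJ, Finset.sum_mul]
  apply Finset.sum_congr rfl
  intro t _
  ring

end CD17

/-- The alternative Christoffel--Darboux formula for multiple orthogonal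
polynomials of mixed type: for `l ≥ max(|n₁|,|n₂|)`,
`(y−x)·K^[l](x,y) = Σ_{(i,j)∈σ₁[l]} Q̄⁽ʲ⁾(x) J_{j,i} Q⁽ⁱ⁾(y)
                  − Σ_{(i,j)∈σ₂[l]} Q̄⁽ʲ⁾(x) J_{j,i} Q⁽ⁱ⁾(y)`.
Types are indexed by `Fin p` (cyclically, so `a ± 1` is mod `p`); `lp m a`
(resp. `lm m a`) denotes the smallest integer `≥ m` (resp. largest `≤ m`)
of the given type. -/
theorem stmt_17
    (μ : Measure ℝ) [IsFiniteMeasure μ]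
    (p₁ p₂ : ℕ) (hp₁ : 1 ≤ p₁) (hp₂ : 1 ≤ p₂)
    (n₁ : Fin p₁ → ℕ) (hn₁ : ∀ a, 1 ≤ n₁ a)
    (n₂ : Fin p₂ → ℕ) (hn₂ : ∀ b, 1 ≤ n₂ b)
    (w₁ : Fin p₁ → ℝ → ℝ) (w₂ : Fin p₂ → ℝ → ℝ)
    (hw₁ : ∀ a, Measurable (w₁ a)) (hw₂ : ∀ b, Measurable (w₂ b))
    (hint : ∀ (m : ℕ) (a : Fin p₁) (b : Fin p₂),
      Integrable (fun x => x ^ m * w₁ a x * w₂ b x) μ)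
    (kk₁ : ℕ → ℕ) (aa₁ : ℕ → Fin p₁) (rr₁ : ℕ → ℕ)
    (hdec₁ : ∀ l, rr₁ l < n₁ (aa₁ l) ∧
      l = kk₁ l * (∑ b, n₁ b) +
          (∑ i ∈ Finset.univ.filter (fun i => i < aa₁ l), n₁ i) + rr₁ l)
    (kk₂ : ℕ → ℕ) (aa₂ : ℕ → Fin p₂) (rr₂ : ℕ → ℕ)
    (hdec₂ : ∀ l, rr₂ l < n₂ (aa₂ l) ∧
      l = kk₂ l * (∑ b, n₂ b) +
          (∑ i ∈ Finset.univ.filter (fun i => i < aa₂ l), n₂ i) + rr₂ l)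
    (ξ₁ : ℕ → ℝ → ℝ)
    (hξ₁ : ∀ i x, ξ₁ i x = w₁ (aa₁ i) x * x ^ (kk₁ i * n₁ (aa₁ i) + rr₁ i))
    (ξ₂ : ℕ → ℝ → ℝ)
    (hξ₂ : ∀ j x, ξ₂ j x = w₂ (aa₂ j) x * x ^ (kk₂ j * n₂ (aa₂ j) + rr₂ j))
    (g : ℕ → ℕ → ℝ)
    (hg : ∀ i j, g i j = ∫ x, ξ₁ i x * ξ₂ j x ∂μ)
    [NeZero p₁] [NeZero p₂]
    (lp₁ : ℕ → Fin p₁ → ℕ)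
    (hlp₁ : ∀ m a, m ≤ lp₁ m a ∧ aa₁ (lp₁ m a) = a ∧
      ∀ i, m ≤ i → aa₁ i = a → lp₁ m a ≤ i)
    (lm₁ : ℕ → Fin p₁ → ℕ)
    (hlm₁ : ∀ m a, (∃ i ≤ m, aa₁ i = a) →
      lm₁ m a ≤ m ∧ aa₁ (lm₁ m a) = a ∧ ∀ i ≤ m, aa₁ i = a → i ≤ lm₁ m a)
    (lp₂ : ℕ → Fin p₂ → ℕ)
    (hlp₂ : ∀ m a, m ≤ lp₂ m a ∧ aa₂ (lp₂ m a) = a ∧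
      ∀ i, m ≤ i → aa₂ i = a → lp₂ m a ≤ i)
    (lm₂ : ℕ → Fin p₂ → ℕ)
    (hlm₂ : ∀ m a, (∃ i ≤ m, aa₂ i = a) →
      lm₂ m a ≤ m ∧ aa₂ (lm₂ m a) = a ∧ ∀ i ≤ m, aa₂ i = a → i ≤ lm₂ m a)
    (S S' : ℕ → ℕ → ℝ)
    (hS_tri : ∀ i j, i < j → S i j = 0) (hS_diag : ∀ i, S i i = 1)
    (hS'_tri : ∀ i j, i < j → S' i j = 0) (hS'_diag : ∀ i, S' i i = 1)
    (hinv₁ : ∀ l m, ∑ k ∈ Finset.range (max l m + 1), S l k * S' k m =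
      if l = m then 1 else 0)
    (hinv₂ : ∀ l m, ∑ k ∈ Finset.range (max l m + 1), S' l k * S k m =
      if l = m then 1 else 0)
    (Sbar Sbar' : ℕ → ℕ → ℝ)
    (hSbar_tri : ∀ i j, j < i → Sbar i j = 0)
    (hSbar'_tri : ∀ i j, j < i → Sbar' i j = 0)
    (hinv₃ : ∀ l m, ∑ k ∈ Finset.range (max l m + 1), Sbar l k * Sbar' k m =
      if l = m then 1 else 0)
    (hinv₄ : ∀ l m, ∑ k ∈ Finset.range (max l m + 1), Sbar' l k * Sbar k m =
      if l = m then 1 else 0)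
    (hSg : ∀ l j, ∑ i ∈ Finset.range (l + 1), S l i * g i j = Sbar l j)
    (Q : ℕ → ℝ → ℝ)
    (hQ : ∀ i y, Q i y = ∑ m ∈ Finset.range (i + 1), S i m * ξ₁ m y)
    (Qbar : ℕ → ℝ → ℝ)
    (hQbar : ∀ j x, Qbar j x = ∑ m ∈ Finset.range (j + 1), Sbar' m j * ξ₂ m x)
    (K : ℕ → ℝ → ℝ → ℝ)
    (hK : ∀ l x y, K l x y = ∑ k ∈ Finset.range l, Q k y * Qbar k x)
    (J : ℕ → ℕ → ℝ)
    (hJ : ∀ l m, J l m = ∑ i ∈ Finset.range (l + 1), S l i * S' (lp₁ (i + 1) (aa₁ i)) m)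
    (l : ℕ) (hl : max (∑ a, n₁ a) (∑ b, n₂ b) ≤ l) (x y : ℝ) :
    (y - x) * K l x y =
      (∑ ij ∈ Finset.Icc l (lp₁ l (aa₁ l - 1)) ×ˢ
          Finset.Icc (lm₁ (l - 1) (aa₁ (l - 1) + 1)) (l - 1),
        Qbar ij.2 x * J ij.2 ij.1 * Q ij.1 y) -
      (∑ ij ∈ Finset.Icc (lm₂ (l - 1) (aa₂ (l - 1) + 1)) (l - 1) ×ˢ
          Finset.Icc l (lp₂ l (aa₂ l - 1)),
        Qbar ij.2 x * J ij.2 ij.1 * Q ij.1 y) := by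
  classical
  -- package the two index systems
  let D₁ : CD17.Idx p₁ := ⟨n₁, hn₁, aa₁, kk₁, rr₁, lp₁, lm₁, hdec₁, hlp₁, hlm₁⟩
  let D₂ : CD17.Idx p₂ := ⟨n₂, hn₂, aa₂, kk₂, rr₂, lp₂, lm₂, hdec₂, hlp₂, hlm₂⟩
  set N₁ := ∑ a, n₁ a with hN₁def
  set N₂ := ∑ b, n₂ b with hN₂def
  have hN₁pos : 1 ≤ N₁ := D₁.Npos
  have hN₂pos : 1 ≤ N₂ := D₂.Npos
  have hN₁l : N₁ ≤ l := le_trans (le_max_left _ _) hl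
  have hN₂l : N₂ ≤ l := le_trans (le_max_right _ _) hl
  have hl1 : 1 ≤ l := le_trans hN₁pos hN₁l
  -- combinatorial facts
  have cle₁ : ∀ t, lp₁ (t+1) (aa₁ t) ≤ t + N₁ := fun t => D₁.sigma_le t
  have cle₂ : ∀ t, lp₂ (t+1) (aa₂ t) ≤ t + N₂ := fun t => D₂.sigma_le t
  have cexp₁ : ∀ t, kk₁ (lp₁ (t+1) (aa₁ t)) * n₁ (aa₁ t) + rr₁ (lp₁ (t+1) (aa₁ t))
      = kk₁ t * n₁ (aa₁ t) + rr₁ t + 1 := fun t => D₁.sigma_exp t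
  have cexp₂ : ∀ t, kk₂ (lp₂ (t+1) (aa₂ t)) * n₂ (aa₂ t) + rr₂ (lp₂ (t+1) (aa₂ t))
      = kk₂ t * n₂ (aa₂ t) + rr₂ t + 1 := fun t => D₂.sigma_exp t
  have caa₁ : ∀ t, aa₁ (lp₁ (t+1) (aa₁ t)) = aa₁ t := fun t => D₁.sigma_aa t
  have caa₂ : ∀ t, aa₂ (lp₂ (t+1) (aa₂ t)) = aa₂ t := fun t => D₂.sigma_aa t
  have cmax₁ : ∀ t, t < l → lp₁ (t+1) (aa₁ t) ≤ lp₁ l (aa₁ l - 1) :=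
    fun t ht => D₁.sigma_le_lp ht
  have cmax₂ : ∀ t, t < l → lp₂ (t+1) (aa₂ t) ≤ lp₂ l (aa₂ l - 1) :=
    fun t ht => D₂.sigma_le_lp ht
  have clt₁ : ∀ t, t < lm₁ (l-1) (aa₁ (l-1) + 1) → lp₁ (t+1) (aa₁ t) < l :=
    fun t ht => D₁.sigma_lt_of_lt_lm hN₁l ht
  have clt₂ : ∀ t, t < lm₂ (l-1) (aa₂ (l-1) + 1) → lp₂ (t+1) (aa₂ t) < l :=
    fun t ht => D₂.sigma_lt_of_lt_lm hN₂l ht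
  have cP₁ : lp₁ l (aa₁ l - 1) < l + N₁ := D₁.lp_lt l _
  have cP₂ : lp₂ l (aa₂ l - 1) < l + N₂ := D₂.lp_lt l _
  have hDN₁ : D₁.N = N₁ := rfl
  have hDN₂ : D₂.N = N₂ := rfl
  have cc₁ : lm₁ (l-1) (aa₁ (l-1) + 1) ≤ l - 1 :=
    (hlm₁ (l-1) _ (D₁.exists_le (by rw [hDN₁]; omega) _)).1
  have cc₂ : lm₂ (l-1) (aa₂ (l-1) + 1) ≤ l - 1 :=
    (hlm₂ (l-1) _ (D₂.exists_le (by rw [hDN₂]; omega) _)).1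
  -- shift property of the monomial strings
  have Shift₁ : ∀ t (z : ℝ), z * ξ₁ t z = ξ₁ (lp₁ (t+1) (aa₁ t)) z := by
    intro t z
    rw [hξ₁, hξ₁, caa₁, cexp₁, pow_succ]
    ring
  have Shift₂ : ∀ t (z : ℝ), z * ξ₂ t z = ξ₂ (lp₂ (t+1) (aa₂ t)) z := by
    intro t z
    rw [hξ₂, hξ₂, caa₂, cexp₂, pow_succ]
    ring
  -- shift-invariance of the moment matrix
  have gshift : ∀ i j, g (lp₁ (i+1) (aa₁ i)) j = g i (lp₂ (j+1) (aa₂ j)) := by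
    intro i j
    rw [hg, hg]
    have he : (fun z => ξ₁ (lp₁ (i+1) (aa₁ i)) z * ξ₂ j z)
        = fun z => ξ₁ i z * ξ₂ (lp₂ (j+1) (aa₂ j)) z := by
      funext z
      rw [← Shift₁ i z, ← Shift₂ j z]
      ring
    rw [he]
  -- the matrix g ∘ Sbar' equals S'
  have hTS : ∀ a, ∀ b, (∑ i ∈ Finset.range (b+1), g a i * Sbar' i b) = S' a b := by
    intro a
    induction a using Nat.strong_induction_on with
    | _ a IH =>
      intro b
      have hT : ∑ k ∈ Finset.range (a+1),
          S a k * (∑ i ∈ Finset.range (b+1), g k i * Sbar' i b) = if a = b then 1 else 0 := by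
        calc ∑ k ∈ Finset.range (a+1), S a k * (∑ i ∈ Finset.range (b+1), g k i * Sbar' i b)
            = ∑ k ∈ Finset.range (a+1), ∑ i ∈ Finset.range (b+1),
                S a k * g k i * Sbar' i b := by
              apply Finset.sum_congr rfl
              intro k _
              rw [Finset.mul_sum]
              apply Finset.sum_congr rfl
              intro i _
              ring
          _ = ∑ i ∈ Finset.range (b+1), ∑ k ∈ Finset.range (a+1),
                S a k * g k i * Sbar' i b := Finset.sum_comm
          _ = ∑ i ∈ Finset.range (b+1), Sbar a i * Sbar' i b := by
              apply Finset.sum_congr rfl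
              intro i _
              rw [← Finset.sum_mul, hSg a i]
          _ = if a = b then 1 else 0 := by
              rcases le_or_gt a b with hab | hab
              · rw [← hinv₃ a b, max_eq_right hab]
              · rw [← hinv₃ a b, max_eq_left hab.le]
                apply Finset.sum_subset (Finset.range_subset_range.mpr (by omega))
                intro i hi hib
                simp only [Finset.mem_range, not_lt] at hi hib
                rw [hSbar'_tri i b (by omega), mul_zero]
      have hA : ∑ k ∈ Finset.range (a+1), S a k * S' k b = if a = b then 1 else 0 := by
        rw [← hinv₁ a b]
        apply Finset.sum_subset (Finset.range_subset_range.mpr (by omega))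
        intro k hk hk2
        simp only [Finset.mem_range, not_lt] at hk hk2
        rw [hS_tri a k (by omega), zero_mul]
      rw [Finset.sum_range_succ] at hA hT
      have hC : ∑ k ∈ Finset.range a, S a k *
          (∑ i ∈ Finset.range (b+1), g k i * Sbar' i b)
          = ∑ k ∈ Finset.range a, S a k * S' k b :=
        Finset.sum_congr rfl (fun k hk => by rw [IH k (Finset.mem_range.mp hk) b])
      rw [hC] at hT
      rw [hS_diag, one_mul] at hA hT
      linarith
  -- the alternative representation of J
  have Jalt : ∀ a b, J a b = ∑ j ∈ Finset.range (b+1),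
      Sbar a (lp₂ (j+1) (aa₂ j)) * Sbar' j b := by
    intro a b
    rw [hJ]
    calc ∑ i ∈ Finset.range (a+1), S a i * S' (lp₁ (i+1) (aa₁ i)) b
        = ∑ i ∈ Finset.range (a+1), ∑ j ∈ Finset.range (b+1),
            S a i * (g i (lp₂ (j+1) (aa₂ j)) * Sbar' j b) := by
          apply Finset.sum_congr rfl
          intro i _
          rw [← hTS (lp₁ (i+1) (aa₁ i)) b, Finset.mul_sum]
          apply Finset.sum_congr rfl
          intro j _
          rw [gshift]
      _ = ∑ j ∈ Finset.range (b+1), ∑ i ∈ Finset.range (a+1),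
            S a i * (g i (lp₂ (j+1) (aa₂ j)) * Sbar' j b) := Finset.sum_comm
      _ = ∑ j ∈ Finset.range (b+1), Sbar a (lp₂ (j+1) (aa₂ j)) * Sbar' j b := by
          apply Finset.sum_congr rfl
          intro j _
          rw [← hSg a (lp₂ (j+1) (aa₂ j)), Finset.sum_mul]
          apply Finset.sum_congr rfl
          intro i _
          ring
  -- vanishing of J entries
  have V1 : ∀ k m, (∀ t, t ≤ k → lp₁ (t+1) (aa₁ t) < m) → J k m = 0 := by
    intro k m hv
    rw [hJ]
    apply Finset.sum_eq_zero
    intro t ht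
    simp only [Finset.mem_range] at ht
    rw [hS'_tri _ m (hv t (by omega)), mul_zero]
  have V2 : ∀ k m, (∀ j, j ≤ k → lp₂ (j+1) (aa₂ j) < m) → J m k = 0 := by
    intro k m hv
    rw [Jalt]
    apply Finset.sum_eq_zero
    intro j hj
    simp only [Finset.mem_range] at hj
    rw [hSbar_tri m _ (hv j (by omega)), zero_mul]
  -- expansions of ξ in terms of Q resp. Qbar
  have hexp1 : ∀ t, ξ₁ t y = ∑ j ∈ Finset.range (t+1), S' t j * Q j y :=
    CD17.tri_expand S S' hS_tri hinv₂ (fun m => ξ₁ m y) (fun i => Q i y)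
      (fun i => hQ i y)
  have hinvT : ∀ a b, ∑ k ∈ Finset.range (max a b + 1), Sbar k a * Sbar' b k
      = if a = b then 1 else 0 := by
    intro a b
    rw [max_comm]
    have he : (if a = b then (1:ℝ) else 0) = if b = a then 1 else 0 := by
      by_cases h : a = b
      · simp [h]
      · simp [h, Ne.symm h]
    rw [he, ← hinv₄ b a]
    apply Finset.sum_congr rfl
    intro k _
    ring
  have hexp2 : ∀ t, ξ₂ t x = ∑ m ∈ Finset.range (t+1), Sbar m t * Qbar m x :=
    CD17.tri_expand (fun i j => Sbar' j i) (fun i j => Sbar j i)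
      (fun i j h => hSbar'_tri j i h) hinvT (fun m => ξ₂ m x) (fun j => Qbar j x)
      (fun j => hQbar j x)
  -- eigen relations
  have Eig1 : ∀ k R, k + N₁ ≤ R →
      y * Q k y = ∑ m ∈ Finset.range (R+1), J k m * Q m y := by
    intro k R hR
    exact CD17.eigen S S' J (fun t => lp₁ (t+1) (aa₁ t)) N₁ hS'_tri cle₁ hJ
      (fun m => ξ₁ m y) (fun i => Q i y) (fun i => hQ i y) hexp1 y
      (fun t => Shift₁ t y) k R hR
  have Eig2 : ∀ k R, k + N₂ ≤ R →
      x * Qbar k x = ∑ m ∈ Finset.range (R+1), J m k * Qbar m x := by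
    intro k R hR
    exact CD17.eigen (fun i j => Sbar' j i) (fun i j => Sbar j i)
      (fun a b => J b a) (fun t => lp₂ (t+1) (aa₂ t)) N₂
      (fun i j h => hSbar_tri j i h) cle₂
      (by
        intro a b
        show J b a = ∑ i ∈ Finset.range (a+1), Sbar' i a * Sbar b (lp₂ (i+1) (aa₂ i))
        rw [Jalt b a]
        exact Finset.sum_congr rfl (fun j _ => mul_comm _ _))
      (fun m => ξ₂ m x) (fun j => Qbar j x) (fun j => hQbar j x) hexp2 x
      (fun t => Shift₂ t x) k R hR
  -- main computation
  set L := l + max N₁ N₂ with hLdef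
  have hsplit : ∀ f : ℕ → ℝ, ∑ m ∈ Finset.range (L+1), f m
      = ∑ m ∈ Finset.range l, f m + ∑ m ∈ Finset.Icc l L, f m := by
    intro f
    have h1 := Finset.sum_Ico_consecutive f (Nat.zero_le l) (by omega : l ≤ L + 1)
    rw [Finset.range_eq_Ico, ← h1, Finset.Ico_add_one_right_eq_Icc, ← Finset.range_eq_Ico]
  have main1 : (y - x) * K l x y =
      (∑ k ∈ Finset.range l, ∑ m ∈ Finset.Icc l L, J k m * Q m y * Qbar k x)
      - (∑ k ∈ Finset.range l, ∑ m ∈ Finset.Icc l L, J m k * Q k y * Qbar m x) := by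
    have step : (y - x) * K l x y =
        (∑ k ∈ Finset.range l, ∑ m ∈ Finset.range (L+1), J k m * Q m y * Qbar k x)
        - (∑ k ∈ Finset.range l, ∑ m ∈ Finset.range (L+1), J m k * Q k y * Qbar m x) := by
      rw [hK, Finset.mul_sum, ← Finset.sum_sub_distrib]
      apply Finset.sum_congr rfl
      intro k hk
      simp only [Finset.mem_range] at hk
      have e1 := Eig1 k L (by omega)
      have e2 := Eig2 k L (by omega)
      calc (y - x) * (Q k y * Qbar k x)
          = (y * Q k y) * Qbar k x - Q k y * (x * Qbar k x) := by ring
        _ = (∑ m ∈ Finset.range (L+1), J k m * Q m y) * Qbar k x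
            - Q k y * (∑ m ∈ Finset.range (L+1), J m k * Qbar m x) := by rw [e1, e2]
        _ = (∑ m ∈ Finset.range (L+1), J k m * Q m y * Qbar k x)
            - (∑ m ∈ Finset.range (L+1), J m k * Q k y * Qbar m x) := by
            rw [Finset.sum_mul, Finset.mul_sum]
            congr 1
            apply Finset.sum_congr rfl
            intro m _
            ring
    rw [step]
    have hs1 : ∑ k ∈ Finset.range l, ∑ m ∈ Finset.range (L+1), J k m * Q m y * Qbar k x
        = (∑ k ∈ Finset.range l, ∑ m ∈ Finset.range l, J k m * Q m y * Qbar k x)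
          + ∑ k ∈ Finset.range l, ∑ m ∈ Finset.Icc l L, J k m * Q m y * Qbar k x := by
      rw [← Finset.sum_add_distrib]
      apply Finset.sum_congr rfl
      intro k _
      exact hsplit _
    have hs2 : ∑ k ∈ Finset.range l, ∑ m ∈ Finset.range (L+1), J m k * Q k y * Qbar m x
        = (∑ k ∈ Finset.range l, ∑ m ∈ Finset.range l, J m k * Q k y * Qbar m x)
          + ∑ k ∈ Finset.range l, ∑ m ∈ Finset.Icc l L, J m k * Q k y * Qbar m x := by
      rw [← Finset.sum_add_distrib]
      apply Finset.sum_congr rfl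
      intro k _
      exact hsplit _
    have hdiag : ∑ k ∈ Finset.range l, ∑ m ∈ Finset.range l, J k m * Q m y * Qbar k x
        = ∑ k ∈ Finset.range l, ∑ m ∈ Finset.range l, J m k * Q k y * Qbar m x :=
      Finset.sum_comm
    rw [hs1, hs2, hdiag]
    ring
  rw [main1]
  -- identify the two boundary sums with the stated rectangles
  have hT1 : ∑ k ∈ Finset.range l, ∑ m ∈ Finset.Icc l L, J k m * Q m y * Qbar k x
      = ∑ ij ∈ Finset.Icc l (lp₁ l (aa₁ l - 1)) ×ˢ
          Finset.Icc (lm₁ (l - 1) (aa₁ (l - 1) + 1)) (l - 1),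
        Qbar ij.2 x * J ij.2 ij.1 * Q ij.1 y := by
    rw [Finset.sum_product, Finset.sum_comm]
    -- now : Σ_{m ∈ Icc l L} Σ_{k ∈ range l} ... = Σ_{i ∈ Icc l P₁} Σ_{j ∈ Icc c₁ (l-1)} ...
    rw [show (Finset.Icc l L) = Finset.Icc l L from rfl]
    have houter : ∑ m ∈ Finset.Icc l L, ∑ k ∈ Finset.range l, J k m * Q m y * Qbar k x
        = ∑ m ∈ Finset.Icc l (lp₁ l (aa₁ l - 1)), ∑ k ∈ Finset.range l,
            J k m * Q m y * Qbar k x := by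
      symm
      apply Finset.sum_subset
      · intro m hm
        simp only [Finset.mem_Icc] at *
        omega
      · intro m hm hm2
        simp only [Finset.mem_Icc, not_and, not_le] at hm hm2
        apply Finset.sum_eq_zero
        intro k hk
        simp only [Finset.mem_range] at hk
        have hz : J k m = 0 := by
          apply V1
          intro t ht
          have := cmax₁ t (by omega)
          have := hm2 hm.1
          omega
        rw [hz, zero_mul, zero_mul]
    rw [houter]
    apply Finset.sum_congr rfl
    intro m hm
    simp only [Finset.mem_Icc] at hm
    have hinner : ∑ k ∈ Finset.range l, J k m * Q m y * Qbar k x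
        = ∑ k ∈ Finset.Icc (lm₁ (l - 1) (aa₁ (l - 1) + 1)) (l - 1),
            J k m * Q m y * Qbar k x := by
      symm
      apply Finset.sum_subset
      · intro k hk
        simp only [Finset.mem_Icc, Finset.mem_range] at *
        omega
      · intro k hk hk2
        simp only [Finset.mem_range] at hk
        simp only [Finset.mem_Icc, not_and, not_le] at hk2
        have hklt : k < lm₁ (l - 1) (aa₁ (l - 1) + 1) := by
          by_contra hc
          push_neg at hc
          exact absurd (hk2 hc) (by omega)
        have hz : J k m = 0 := by
          apply V1
          intro t ht
          have := clt₁ t (by omega)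
          omega
        rw [hz, zero_mul, zero_mul]
    rw [hinner]
    apply Finset.sum_congr rfl
    intro k _
    ring
  have hT2 : ∑ k ∈ Finset.range l, ∑ m ∈ Finset.Icc l L, J m k * Q k y * Qbar m x
      = ∑ ij ∈ Finset.Icc (lm₂ (l - 1) (aa₂ (l - 1) + 1)) (l - 1) ×ˢ
          Finset.Icc l (lp₂ l (aa₂ l - 1)),
        Qbar ij.2 x * J ij.2 ij.1 * Q ij.1 y := by
    rw [Finset.sum_product]
    have houter : ∑ k ∈ Finset.range l, ∑ m ∈ Finset.Icc l L, J m k * Q k y * Qbar m x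
        = ∑ k ∈ Finset.Icc (lm₂ (l - 1) (aa₂ (l - 1) + 1)) (l - 1),
            ∑ m ∈ Finset.Icc l L, J m k * Q k y * Qbar m x := by
      symm
      apply Finset.sum_subset
      · intro k hk
        simp only [Finset.mem_Icc, Finset.mem_range] at *
        omega
      · intro k hk hk2
        simp only [Finset.mem_range] at hk
        simp only [Finset.mem_Icc, not_and, not_le] at hk2
        have hklt : k < lm₂ (l - 1) (aa₂ (l - 1) + 1) := by
          by_contra hc
          push_neg at hc
          exact absurd (hk2 hc) (by omega)
        apply Finset.sum_eq_zero
        intro m hm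
        simp only [Finset.mem_Icc] at hm
        have hz : J m k = 0 := by
          apply V2
          intro j hj
          have := clt₂ j (by omega)
          omega
        rw [hz, zero_mul, zero_mul]
    rw [houter]
    apply Finset.sum_congr rfl
    intro k hk
    simp only [Finset.mem_Icc] at hk
    have hinner : ∑ m ∈ Finset.Icc l L, J m k * Q k y * Qbar m x
        = ∑ m ∈ Finset.Icc l (lp₂ l (aa₂ l - 1)), J m k * Q k y * Qbar m x := by
      symm
      apply Finset.sum_subset
      · intro m hm
        simp only [Finset.mem_Icc] at *
        omega
      · intro m hm hm2
        simp only [Finset.mem_Icc, not_and, not_le] at hm hm2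
        have hz : J m k = 0 := by
          apply V2
          intro j hj
          have := cmax₂ j (by omega)
          have := hm2 hm.1
          omega
        rw [hz, zero_mul, zero_mul]
    rw [hinner]
    apply Finset.sum_congr rfl
    intro m _
    ring
  rw [hT1, hT2]
end

section
/- Let n₁ be a composition of length p₁, and for an integer m let m_{{+,a}} (resp. m_{{−,a}}) denote the smallest integer ≥ m (resp. largest integer ≤ m) of type a with respect to n₁, and σ₁(i) = (i+1)_{{+,a₁(i)}}. Let S, S' be mutually inverse lower unitriangular semi-infinite real matrices and define J_{l,m} = Σ_{i≤l} S_{l,i} S'_{σ₁(i),m}. Then for every l ≥ |n₁|: J_{l,l} = S_{l,(l−1)_{{−,a₁(l)}}} + S'_{(l+1)_{{+,a₁(l)}},l} + Σ_{a=1, a≠a₁(l)}^{p₁} S_{l,(l−1)_{{−,a}}} · S'_{(l+1)_{{+,a}},l}. -/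
/-- Diagonal entries of the Jacobi-type matrix `J = SΥ₁S⁻¹` in terms of the
entries of the Gauss--Borel factor `S` and its inverse `S'`: for `l ≥ |n₁|`,
`J_{l,l} = S_{l,(l−1)_{−,a₁(l)}} + S'_{(l+1)_{+,a₁(l)},l}
         + Σ_{a ≠ a₁(l)} S_{l,(l−1)_{−,a}} · S'_{(l+1)_{+,a},l}`. -/
theorem stmt_19 (p₁ : ℕ) (hp₁ : 1 ≤ p₁)
    (n₁ : Fin p₁ → ℕ) (hn₁ : ∀ a, 1 ≤ n₁ a)
    (kk₁ : ℕ → ℕ) (aa₁ : ℕ → Fin p₁) (rr₁ : ℕ → ℕ)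
    (hdec₁ : ∀ l, rr₁ l < n₁ (aa₁ l) ∧
      l = kk₁ l * (∑ b, n₁ b) +
          (∑ i ∈ Finset.univ.filter (fun i => i < aa₁ l), n₁ i) + rr₁ l)
    (lp₁ : ℕ → Fin p₁ → ℕ)
    (hlp₁ : ∀ m a, m ≤ lp₁ m a ∧ aa₁ (lp₁ m a) = a ∧
      ∀ i, m ≤ i → aa₁ i = a → lp₁ m a ≤ i)
    (lm₁ : ℕ → Fin p₁ → ℕ)
    (hlm₁ : ∀ m a, (∃ i ≤ m, aa₁ i = a) →
      lm₁ m a ≤ m ∧ aa₁ (lm₁ m a) = a ∧ ∀ i ≤ m, aa₁ i = a → i ≤ lm₁ m a)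
    (S S' : ℕ → ℕ → ℝ)
    (hS_tri : ∀ i j, i < j → S i j = 0) (hS_diag : ∀ i, S i i = 1)
    (hS'_tri : ∀ i j, i < j → S' i j = 0) (hS'_diag : ∀ i, S' i i = 1)
    (hinv₁ : ∀ l m, ∑ k ∈ Finset.range (max l m + 1), S l k * S' k m =
      if l = m then 1 else 0)
    (hinv₂ : ∀ l m, ∑ k ∈ Finset.range (max l m + 1), S' l k * S k m =
      if l = m then 1 else 0)
    (J : ℕ → ℕ → ℝ)
    (hJ : ∀ l m, J l m = ∑ i ∈ Finset.range (l + 1), S l i * S' (lp₁ (i + 1) (aa₁ i)) m)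
    (l : ℕ) (hl : ∑ a, n₁ a ≤ l) :
    J l l = S l (lm₁ (l - 1) (aa₁ l)) + S' (lp₁ (l + 1) (aa₁ l)) l +
      ∑ a ∈ Finset.univ.erase (aa₁ l),
        S l (lm₁ (l - 1) a) * S' (lp₁ (l + 1) a) l := by
  classical
  have hNpos : 1 ≤ ∑ a, n₁ a := by
    calc 1 ≤ n₁ ⟨0, hp₁⟩ := hn₁ _
    _ ≤ ∑ a, n₁ a := Finset.single_le_sum (fun i _ => Nat.zero_le _) (Finset.mem_univ _)
  have hl1 : 1 ≤ l := le_trans hNpos hl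
  -- partial sums
  have hPins : ∀ a : Fin p₁,
      (∑ i ∈ Finset.univ.filter (fun i => i < a), n₁ i) + n₁ a
        = ∑ i ∈ insert a (Finset.univ.filter (fun i => i < a)), n₁ i := by
    intro a
    rw [Finset.sum_insert (by simp)]
    ring
  have hPn : ∀ a : Fin p₁,
      (∑ i ∈ Finset.univ.filter (fun i => i < a), n₁ i) + n₁ a ≤ ∑ b, n₁ b := by
    intro a
    rw [hPins a]
    exact Finset.sum_le_sum_of_subset (Finset.subset_univ _)
  have hPlt : ∀ a b : Fin p₁, a < b →
      (∑ i ∈ Finset.univ.filter (fun i => i < a), n₁ i) + n₁ a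
        ≤ ∑ i ∈ Finset.univ.filter (fun i => i < b), n₁ i := by
    intro a b hab
    rw [hPins a]
    apply Finset.sum_le_sum_of_subset
    intro x hx
    simp only [Finset.mem_insert, Finset.mem_filter, Finset.mem_univ, true_and] at hx ⊢
    rcases hx with rfl | hx
    · exact hab
    · exact lt_trans hx hab
  -- uniqueness of the type
  have huniq : ∀ (i : ℕ) (a : Fin p₁) (kk rr : ℕ), rr < n₁ a →
      i = kk * (∑ b, n₁ b) + (∑ j ∈ Finset.univ.filter (fun j => j < a), n₁ j) + rr →
      aa₁ i = a := by
    intro i a kk rr hrr hi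
    obtain ⟨hr', hi'⟩ := hdec₁ i
    have h1 : (∑ j ∈ Finset.univ.filter (fun j => j < aa₁ i), n₁ j) + rr₁ i < ∑ b, n₁ b :=
      lt_of_lt_of_le (by have := hPn (aa₁ i); omega) (hPn (aa₁ i))
    have h2 : (∑ j ∈ Finset.univ.filter (fun j => j < a), n₁ j) + rr < ∑ b, n₁ b :=
      lt_of_lt_of_le (by have := hPn a; omega) (hPn a)
    have e1 : (∑ j ∈ Finset.univ.filter (fun j => j < aa₁ i), n₁ j) + rr₁ i
        + kk₁ i * (∑ b, n₁ b)
        = (∑ j ∈ Finset.univ.filter (fun j => j < a), n₁ j) + rr + kk * (∑ b, n₁ b) := by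
      omega
    have heq : (∑ j ∈ Finset.univ.filter (fun j => j < aa₁ i), n₁ j) + rr₁ i
        = (∑ j ∈ Finset.univ.filter (fun j => j < a), n₁ j) + rr := by
      have := congrArg (· % (∑ b, n₁ b)) e1
      simpa [Nat.add_mul_mod_self_right, Nat.mod_eq_of_lt h1, Nat.mod_eq_of_lt h2] using this
    rcases lt_trichotomy (aa₁ i) a with h | h | h
    · have := hPlt _ _ h; omega
    · exact h
    · have := hPlt _ _ h; omega
  -- h1 above was sloppy; continue
  -- existence of an index of each type below l
  have hex : ∀ a : Fin p₁, ∃ i ≤ l - 1, aa₁ i = a := by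
    intro a
    refine ⟨∑ j ∈ Finset.univ.filter (fun j => j < a), n₁ j, ?_,
      huniq _ a 0 0 (hn₁ a) (by simp)⟩
    have := hPn a; have := hn₁ a; omega
  -- facts about lm₁ (l-1) a
  have hmfacts : ∀ a : Fin p₁, lm₁ (l-1) a ≤ l - 1 ∧ aa₁ (lm₁ (l-1) a) = a ∧
      ∀ i ≤ l - 1, aa₁ i = a → i ≤ lm₁ (l-1) a := fun a => hlm₁ (l-1) a (hex a)
  have hmlt : ∀ a : Fin p₁, lm₁ (l-1) a < l := fun a => by
    have := (hmfacts a).1; omega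
  -- sigma at the distinguished points
  have hσm_eq : lp₁ (lm₁ (l-1) (aa₁ l) + 1) (aa₁ (lm₁ (l-1) (aa₁ l))) = l := by
    obtain ⟨hm1, hm2, hm3⟩ := hmfacts (aa₁ l)
    obtain ⟨h1, h2, h3⟩ := hlp₁ (lm₁ (l-1) (aa₁ l) + 1) (aa₁ (lm₁ (l-1) (aa₁ l)))
    have hle : lp₁ (lm₁ (l-1) (aa₁ l) + 1) (aa₁ (lm₁ (l-1) (aa₁ l))) ≤ l :=
      h3 l (by have := hmlt (aa₁ l); omega) (by rw [hm2])
    have hge : l ≤ lp₁ (lm₁ (l-1) (aa₁ l) + 1) (aa₁ (lm₁ (l-1) (aa₁ l))) := by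
      by_contra h
      push_neg at h
      have := hm3 (lp₁ (lm₁ (l-1) (aa₁ l) + 1) (aa₁ (lm₁ (l-1) (aa₁ l))))
        (by omega) (by rw [h2, hm2])
      omega
    omega
  have hσm_ne : ∀ a : Fin p₁, a ≠ aa₁ l →
      lp₁ (lm₁ (l-1) a + 1) (aa₁ (lm₁ (l-1) a)) = lp₁ (l + 1) a := by
    intro a ha
    obtain ⟨hm1, hm2, hm3⟩ := hmfacts a
    obtain ⟨h1, h2, h3⟩ := hlp₁ (lm₁ (l-1) a + 1) (aa₁ (lm₁ (l-1) a))
    obtain ⟨hp1, hp2, hp3⟩ := hlp₁ (l+1) a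
    have hge : l + 1 ≤ lp₁ (lm₁ (l-1) a + 1) (aa₁ (lm₁ (l-1) a)) := by
      by_contra h
      push_neg at h
      have hne : lp₁ (lm₁ (l-1) a + 1) (aa₁ (lm₁ (l-1) a)) ≠ l := by
        intro he
        have : aa₁ l = a := by rw [← he, h2, hm2]
        exact ha this.symm
      have := hm3 (lp₁ (lm₁ (l-1) a + 1) (aa₁ (lm₁ (l-1) a))) (by omega) (by rw [h2, hm2])
      omega
    have hle := h3 _ (by omega : lm₁ (l-1) a + 1 ≤ lp₁ (l+1) a) (by rw [hp2, hm2])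
    have := hp3 (lp₁ (lm₁ (l-1) a + 1) (aa₁ (lm₁ (l-1) a))) hge (by rw [h2, hm2])
    omega
  -- the support of the sum
  set T : Finset ℕ := insert l (Finset.image (fun a => lm₁ (l-1) a) Finset.univ) with hT
  have hTsub : T ⊆ Finset.range (l+1) := by
    intro x hx
    simp only [hT, Finset.mem_insert, Finset.mem_image, Finset.mem_univ, true_and] at hx
    rcases hx with rfl | ⟨a, rfl⟩
    · simp
    · exact Finset.mem_range.mpr (lt_trans (hmlt a) (Nat.lt_succ_self l))
  have hzero : ∀ i ∈ Finset.range (l+1), i ∉ T →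
      S l i * S' (lp₁ (i + 1) (aa₁ i)) l = 0 := by
    intro i hi hni
    simp only [hT, Finset.mem_insert, Finset.mem_image, Finset.mem_univ, true_and,
      not_or, not_exists] at hni
    obtain ⟨hne, hnm⟩ := hni
    have hil : i ≤ l - 1 := by
      have := Finset.mem_range.mp hi; omega
    obtain ⟨h1, h2, h3⟩ := hlp₁ (i+1) (aa₁ i)
    obtain ⟨hm1, hm2, hm3⟩ := hmfacts (aa₁ i)
    have hi_le : i ≤ lm₁ (l-1) (aa₁ i) := hm3 i hil rfl
    have hi_ne : i ≠ lm₁ (l-1) (aa₁ i) := fun h => hnm (aa₁ i) h.symm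
    have hs : lp₁ (i+1) (aa₁ i) ≤ lm₁ (l-1) (aa₁ i) := h3 (lm₁ (l-1) (aa₁ i)) (by omega) hm2
    have : lp₁ (i+1) (aa₁ i) < l := by have := hmlt (aa₁ i); omega
    rw [hS'_tri _ _ this, mul_zero]
  have hlnotmem : l ∉ Finset.image (fun a => lm₁ (l-1) a) Finset.univ := by
    simp only [Finset.mem_image, Finset.mem_univ, true_and, not_exists]
    intro a ha
    exact absurd ha (Nat.ne_of_lt (hmlt a))
  have hinj : ∀ a ∈ Finset.univ, ∀ b ∈ (Finset.univ : Finset (Fin p₁)),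
      lm₁ (l-1) a = lm₁ (l-1) b → a = b := by
    intro a _ b _ h
    rw [← (hmfacts a).2.1, h, (hmfacts b).2.1]
  rw [hJ l l, ← Finset.sum_subset hTsub hzero, hT, Finset.sum_insert hlnotmem,
    Finset.sum_image hinj, hS_diag, one_mul,
    ← Finset.add_sum_erase _ _ (Finset.mem_univ (aa₁ l)), hσm_eq, hS'_diag, mul_one]
  rw [Finset.sum_congr rfl (fun a ha => by
    rw [hσm_ne a (Finset.ne_of_mem_erase ha)])]
  ring
end
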